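/- arXiv:1812.08038 — 5 statements merged into one kernel-verified Lean document; each statement's English description precedes it below -/
import Mathlib

section
/- Let y > 0 be a real number with y ≠ 1, let r ≥ 2 be an integer, and let a₀, a₁, …, a_r be vectors in ℤ² with a₀ + a₁ + … + a_r = 0. For each j ∈ {1, …, r} let A_j be the sequence consisting of the vector a₀ + a_j together with the vectors a_k for 1 ≤ k ≤ r, k ≠ j. Then Σ_{j=1}^{r} [a₀ ∧ a_j]⁻_y · μ⁺_y(A_j) = 0. -/
/-- The wedge product `a ∧ b = a₁b₂ − a₂b₁` of two vectors in `ℤ²`. -/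
def wedge (a b : ℤ × ℤ) : ℤ := a.1 * b.2 - a.2 * b.1

/-- `[α]⁻_y = (y^{α/2} − y^{−α/2})/(y^{1/2} − y^{−1/2})`. -/
noncomputable def brM (y : ℝ) (α : ℤ) : ℝ :=
  (y ^ ((α : ℝ) / 2) - y ^ (-(α : ℝ) / 2)) / (y ^ ((1 : ℝ) / 2) - y ^ (-(1 : ℝ) / 2))

/-- `[α]⁺_y = (y^{α/2} + y^{−α/2})/(y^{1/2} + y^{−1/2})`. -/
noncomputable def brP (y : ℝ) (α : ℤ) : ℝ :=
  (y ^ ((α : ℝ) / 2) + y ^ (-(α : ℝ) / 2)) / (y ^ ((1 : ℝ) / 2) + y ^ (-(1 : ℝ) / 2))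

/-- The sequence `A´_{ij}`: delete the `i`-th and `j`-th entries of `A` (for `i < j`)
and append their sum. -/
def pairReduce (A : List (ℤ × ℤ)) (i j : ℕ) : List (ℤ × ℤ) :=
  ((A.eraseIdx j).eraseIdx i) ++ [A.getD i 0 + A.getD j 0]

/-- Fuel-based implementation of `μ⁺_y`; with fuel `≥ A.length` it computes the
recursion `μ⁺_y(A) = 1` for `|A| ≤ 2`, `μ⁺_y(A) = [|a₁ ∧ a₂|]⁺_y` for `|A| = 3`, and
`μ⁺_y(A) = Σ_{i<j} μ⁺_y(A´_{ij})·μ⁺_y(A´´_{ij})` for `|A| ≥ 4`. -/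
noncomputable def muAux (y : ℝ) : ℕ → List (ℤ × ℤ) → ℝ
  | 0, _ => 1
  | n + 1, A =>
    if A.length ≤ 2 then 1
    else if A.length = 3 then brP y |wedge (A.getD 0 0) (A.getD 1 0)|
    else ∑ i ∈ Finset.range A.length, ∑ j ∈ Finset.Ioo i A.length,
      muAux y n (pairReduce A i j) *
        muAux y n [A.getD i 0, A.getD j 0, -(A.getD i 0 + A.getD j 0)]

/-- The refined multiplicity function `μ⁺_y(A)` of a finite sequence of vectors in `ℤ²`. -/
noncomputable def muPlus (y : ℝ) (A : List (ℤ × ℤ)) : ℝ := muAux y A.length A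

-- ===== auxiliary development =====

lemma brP_neg (y : ℝ) (α : ℤ) : brP y (-α) = brP y α := by
  unfold brP
  rw [show ((-α : ℤ) : ℝ) / 2 = -(α : ℝ) / 2 by push_cast; ring,
    show -((-α : ℤ) : ℝ) / 2 = (α : ℝ) / 2 by push_cast; ring]
  ring

lemma brM_neg (y : ℝ) (α : ℤ) : brM y (-α) = -brM y α := by
  unfold brM
  rw [show ((-α : ℤ) : ℝ) / 2 = -(α : ℝ) / 2 by push_cast; ring,
    show -((-α : ℤ) : ℝ) / 2 = (α : ℝ) / 2 by push_cast; ring]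
  ring

lemma brP_abs (y : ℝ) (α : ℤ) : brP y |α| = brP y α := by
  rcases abs_choice α with h | h
  · rw [h]
  · rw [h, brP_neg]

private lemma star_aux (t X Y Z : ℝ) (ht0 : 0 < t) (ht1 : t ≠ 1)
    (hX : X ≠ 0) (hY : Y ≠ 0) (hZ : Z ≠ 0) :
    (X - X⁻¹) / (t - t⁻¹) * ((Y * Z + (Y * Z)⁻¹) / (t + t⁻¹)) +
      (Y - Y⁻¹) / (t - t⁻¹) * ((X * Z⁻¹ + (X * Z⁻¹)⁻¹) / (t + t⁻¹)) =
    (X * Y - (X * Y)⁻¹) / (t - t⁻¹) * ((Z + Z⁻¹) / (t + t⁻¹)) := by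
  have htne : t ≠ 0 := ht0.ne'
  have hs : t - t⁻¹ ≠ 0 := by
    intro h
    have h2 : t * t = 1 := by field_simp at h; linarith [h]
    have h3 : (t - 1) * (t + 1) = 0 := by nlinarith
    rcases mul_eq_zero.mp h3 with h4 | h4
    · exact ht1 (by linarith)
    · linarith
  have hp : t + t⁻¹ ≠ 0 := by positivity
  field_simp
  ring

section st
variable {y : ℝ} (hy0 : 0 < y) (hy1 : y ≠ 1)

include hy0 in
lemma rpow_half_zpow (α : ℤ) : y ^ ((α : ℝ) / 2) = (y ^ ((1:ℝ)/2)) ^ α := by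
  rw [show (α:ℝ)/2 = (1/2) * (α:ℝ) by ring, Real.rpow_mul hy0.le, Real.rpow_intCast]

include hy0 in
lemma rpow_half_zpow_neg (α : ℤ) : y ^ (-(α : ℝ) / 2) = ((y ^ ((1:ℝ)/2)) ^ α)⁻¹ := by
  rw [show -(α:ℝ)/2 = ((-α : ℤ):ℝ)/2 by push_cast; ring, rpow_half_zpow hy0, zpow_neg]

include hy0 in
lemma rpow_half_inv : y ^ (-(1:ℝ) / 2) = (y ^ ((1:ℝ)/2))⁻¹ := by
  rw [neg_div, Real.rpow_neg hy0.le]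

include hy0 in
lemma brM_t (α : ℤ) : brM y α =
    ((y ^ ((1:ℝ)/2)) ^ α - ((y ^ ((1:ℝ)/2)) ^ α)⁻¹) / (y ^ ((1:ℝ)/2) - (y ^ ((1:ℝ)/2))⁻¹) := by
  unfold brM
  rw [rpow_half_zpow hy0 α, rpow_half_zpow_neg hy0 α, rpow_half_inv hy0]

include hy0 in
lemma brP_t (α : ℤ) : brP y α =
    ((y ^ ((1:ℝ)/2)) ^ α + ((y ^ ((1:ℝ)/2)) ^ α)⁻¹) / (y ^ ((1:ℝ)/2) + (y ^ ((1:ℝ)/2))⁻¹) := by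
  unfold brP
  rw [rpow_half_zpow hy0 α, rpow_half_zpow_neg hy0 α, rpow_half_inv hy0]

include hy0 hy1 in
lemma starId (a b c : ℤ) :
    brM y a * brP y (b + c) + brM y b * brP y (a - c) = brM y (a + b) * brP y c := by
  have ht0 : 0 < y ^ ((1:ℝ)/2) := Real.rpow_pos_of_pos hy0 _
  have htne : y ^ ((1:ℝ)/2) ≠ 0 := ht0.ne'
  have ht1 : y ^ ((1:ℝ)/2) ≠ 1 := by
    intro h
    apply hy1
    have h2 : (y ^ ((1:ℝ)/2)) ^ (2:ℤ) = y := by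
      rw [← Real.rpow_intCast (y ^ ((1:ℝ)/2)) 2, ← Real.rpow_mul hy0.le]; norm_num
    rw [h] at h2; simpa using h2.symm
  rw [brM_t hy0 a, brM_t hy0 b, brM_t hy0 (a+b), brP_t hy0 (b+c), brP_t hy0 (a-c), brP_t hy0 c,
    zpow_add₀ htne b c, zpow_add₀ htne a b, zpow_sub₀ htne a c, div_eq_mul_inv ((y ^ ((1:ℝ)/2)) ^ a)]
  exact star_aux _ _ _ _ ht0 ht1 (zpow_ne_zero _ htne) (zpow_ne_zero _ htne) (zpow_ne_zero _ htne)
end st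

abbrev V := ℤ × ℤ

/-- Sum of `f` over a multiset. -/
noncomputable def msum (M : Multiset V) (f : V → ℝ) : ℝ := (M.map f).sum

@[simp] lemma msum_zero (f : V → ℝ) : msum 0 f = 0 := rfl

@[simp] lemma msum_cons (a : V) (M : Multiset V) (f : V → ℝ) :
    msum (a ::ₘ M) f = f a + msum M f := by
  simp [msum]

lemma msum_congr {M : Multiset V} {f g : V → ℝ} (h : ∀ x ∈ M, f x = g x) :
    msum M f = msum M g := by
  unfold msum
  rw [Multiset.map_congr rfl h]

lemma msum_add (M : Multiset V) (f g : V → ℝ) :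
    msum M (fun x => f x + g x) = msum M f + msum M g := by
  induction M using Multiset.induction with
  | empty => simp
  | cons a M ih => simp [ih]; ring

lemma msum_mul (M : Multiset V) (c : ℝ) (f : V → ℝ) :
    msum M (fun x => c * f x) = c * msum M f := by
  induction M using Multiset.induction with
  | empty => simp
  | cons a M ih => simp [ih]; ring

lemma msum_div (M : Multiset V) (c : ℝ) (f : V → ℝ) :
    msum M (fun x => f x / c) = msum M f / c := by
  induction M using Multiset.induction with
  | empty => simp
  | cons a M ih => simp [ih]; ring

lemma msum_neg (M : Multiset V) (f : V → ℝ) :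
    msum M (fun x => -f x) = -msum M f := by
  induction M using Multiset.induction with
  | empty => simp
  | cons a M ih => simp [ih]; ring

/-- Exchange of a double sum over distinct positions of a multiset. -/
lemma msum_exchange (F : V → V → ℝ) (M : Multiset V) :
    msum M (fun x => msum (M.erase x) (fun z => F x z)) =
    msum M (fun z => msum (M.erase z) (fun x => F x z)) := by
  induction M using Multiset.induction with
  | empty => simp
  | cons a M ih =>
    rw [msum_cons, msum_cons]
    rw [msum_congr (fun x hx => by
      rw [Multiset.erase_cons_tail_of_mem hx, msum_cons] :
        ∀ x ∈ M, msum ((a ::ₘ M).erase x) (fun z => F x z)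
          = F x a + msum (M.erase x) (fun z => F x z))]
    rw [msum_congr (fun z hz => by
      rw [Multiset.erase_cons_tail_of_mem hz, msum_cons] :
        ∀ z ∈ M, msum ((a ::ₘ M).erase z) (fun x => F x z)
          = F a z + msum (M.erase z) (fun x => F x z))]
    rw [msum_add, msum_add, ih, Multiset.erase_cons_head]
    ring

/-- Multiset version of `μ⁺`. -/
noncomputable def Fm (y : ℝ) : ℕ → Multiset V → ℝ
  | 0, _ => 1
  | n + 1, M =>
    if Multiset.card M ≤ 2 then 1
    else if Multiset.card M = 3 then
      msum M (fun x => msum (M.erase x) (fun z => brP y |wedge x z|)) / 6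
    else
      msum M (fun x => msum (M.erase x) (fun z =>
        brP y |wedge x z| * Fm y n ((x + z) ::ₘ (M.erase x).erase z))) / 2

lemma Fm_two (y : ℝ) (n : ℕ) (M : Multiset V) (h : Multiset.card M ≤ 2) :
    Fm y (n+1) M = 1 := by
  rw [Fm, if_pos h]

lemma Fm_big (y : ℝ) (n : ℕ) (M : Multiset V) (h : 4 ≤ Multiset.card M) :
    Fm y (n+1) M = msum M (fun x => msum (M.erase x) (fun z =>
        brP y |wedge x z| * Fm y n ((x + z) ::ₘ (M.erase x).erase z))) / 2 := by
  rw [Fm, if_neg (by omega), if_neg (by omega)]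

-- wedge lemmas
lemma wedge_comm (a b : V) : wedge a b = -wedge b a := by simp [wedge]; ring
lemma abs_wedge_comm (a b : V) : |wedge a b| = |wedge b a| := by rw [wedge_comm, abs_neg]
lemma wedge_add_left (a b c : V) : wedge (a + b) c = wedge a c + wedge b c := by
  simp [wedge]; ring
lemma wedge_add_right (a b c : V) : wedge a (b + c) = wedge a b + wedge a c := by
  simp [wedge]; ring
lemma wedge_neg_left (a b : V) : wedge (-a) b = -wedge a b := by simp [wedge]; ring
lemma wedge_neg_right (a b : V) : wedge a (-b) = -wedge a b := by simp [wedge]; ring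
@[simp] lemma wedge_self (a : V) : wedge a a = 0 := by simp [wedge]; ring

/-- `Fm` on a balanced triple. -/
lemma Fm_three (y : ℝ) (n : ℕ) (p q s : V) (hbal : p + q + s = 0) :
    Fm y (n+1) (p ::ₘ q ::ₘ s ::ₘ 0) = brP y |wedge p q| := by
  have hcard : Multiset.card (p ::ₘ q ::ₘ s ::ₘ 0) = 3 := by simp
  rw [Fm, if_neg (by omega), if_pos hcard]
  have e1 : (p ::ₘ q ::ₘ s ::ₘ 0).erase p = q ::ₘ s ::ₘ 0 := Multiset.erase_cons_head _ _
  have e2 : (p ::ₘ q ::ₘ s ::ₘ 0).erase q = p ::ₘ s ::ₘ 0 := by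
    rw [Multiset.erase_cons_tail_of_mem (Multiset.mem_cons_self _ _), Multiset.erase_cons_head]
  have e3 : (p ::ₘ q ::ₘ s ::ₘ 0).erase s = p ::ₘ q ::ₘ 0 := by
    rw [Multiset.erase_cons_tail_of_mem (by simp), Multiset.erase_cons_tail_of_mem (by simp),
      Multiset.erase_cons_head]
  have hs : s = -(p + q) := by
    have h2 : s = -(p+q) + (p + q + s) := by abel
    rw [hbal] at h2; simpa using h2
  have w1 : wedge p s = -wedge p q := by
    rw [hs, wedge_neg_right, wedge_add_right, wedge_self]; ring
  have w2 : wedge q s = wedge p q := by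
    rw [hs, wedge_neg_right, wedge_add_right, wedge_self, wedge_comm q p]; ring
  have w3 : wedge s p = wedge p q := by
    rw [hs, wedge_neg_left, wedge_add_left, wedge_self, wedge_comm q p]; ring
  have w4 : wedge s q = -wedge p q := by
    rw [hs, wedge_neg_left, wedge_add_left, wedge_self]; ring
  have w5 : wedge q p = -wedge p q := by rw [wedge_comm]
  rw [msum_cons, msum_cons, msum_cons, msum_zero, e1, e2, e3]
  rw [msum_cons, msum_cons, msum_zero, msum_cons, msum_cons, msum_zero,
    msum_cons, msum_cons, msum_zero]
  rw [w1, w2, w3, w4, w5, abs_neg]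
  ring

/-- single sum over list values to msum -/
lemma list_sum_msum (φ : V → ℝ) : ∀ (A : List V),
    ∑ i ∈ Finset.range A.length, φ (A.getD i 0) = msum (↑A) φ := by
  intro A
  induction A with
  | nil => simp [msum]
  | cons a A ih =>
    rw [show ((a :: A : List V) : Multiset V) = a ::ₘ (↑A) from rfl, msum_cons, ← ih]
    rw [List.length_cons, Finset.sum_range_succ']
    simp only [List.getD_cons_succ, List.getD_cons_zero]
    ring

/-- double sum over position pairs of a list equals multiset double sum, for symmetric h -/
lemma list_pairs_msum (h : V → V → ℝ) (hsym : ∀ x z, h x z = h z x) : ∀ (A : List V),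
    2 * ∑ i ∈ Finset.range A.length, ∑ j ∈ Finset.Ioo i A.length, h (A.getD i 0) (A.getD j 0)
      = msum (↑A) (fun x => msum ((↑A : Multiset V).erase x) (h x)) := by
  intro A
  induction A with
  | nil => simp [msum]
  | cons a A ih =>
    have coeA : ((a :: A : List V) : Multiset V) = a ::ₘ (↑A) := rfl
    rw [coeA, msum_cons, Multiset.erase_cons_head]
    rw [msum_congr (fun x hx => by
      rw [Multiset.erase_cons_tail_of_mem hx, msum_cons] :
        ∀ x ∈ (↑A : Multiset V), msum ((a ::ₘ (↑A : Multiset V)).erase x) (h x)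
          = h x a + msum ((↑A : Multiset V).erase x) (h x))]
    rw [msum_add, ← ih]
    rw [msum_congr (fun x _ => hsym x a), ← list_sum_msum (h a) A]
    rw [List.length_cons, Finset.sum_range_succ']
    have hshift : ∀ i, ∑ j ∈ Finset.Ioo (i+1) (A.length + 1),
        h ((a :: A).getD (i+1) 0) ((a :: A).getD j 0)
        = ∑ j ∈ Finset.Ioo i A.length, h (A.getD i 0) (A.getD j 0) := by
      intro i
      rw [show Finset.Ioo (i+1) (A.length+1) = Finset.Ico (i+2) (A.length+1) from rfl,
        show Finset.Ioo i A.length = Finset.Ico (i+1) A.length from rfl,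
        Finset.sum_Ico_eq_sum_range, Finset.sum_Ico_eq_sum_range]
      apply Finset.sum_congr (by congr 1; omega)
      intro k _
      rw [show i+2+k = (i+1+k)+1 by omega]
      simp only [List.getD_cons_succ]
    have hzero : ∑ j ∈ Finset.Ioo 0 (A.length + 1), h ((a :: A).getD 0 0) ((a :: A).getD j 0)
        = ∑ i ∈ Finset.range A.length, h a (A.getD i 0) := by
      rw [show Finset.Ioo 0 (A.length+1) = Finset.Ico 1 (A.length+1) from rfl,
        Finset.sum_Ico_eq_sum_range]
      apply Finset.sum_congr (by congr 1)
      intro k _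
      rw [show 1+k = k+1 by omega]
      simp only [List.getD_cons_zero, List.getD_cons_succ]
    rw [Finset.sum_congr rfl (fun i _ => hshift i), hzero]
    ring

lemma pairReduce_multiset (A : List V) (i j : ℕ) (hij : i < j) (hj : j < A.length) :
    ((↑A : Multiset V) = A.getD i 0 ::ₘ A.getD j 0 ::ₘ ↑((A.eraseIdx j).eraseIdx i)) ∧
    (↑(pairReduce A i j) : Multiset V)
      = (A.getD i 0 + A.getD j 0) ::ₘ ↑((A.eraseIdx j).eraseIdx i) := by
  have hi : i < A.length := lt_trans hij hj
  have hi' : i < (A.eraseIdx j).length := by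
    rw [List.length_eraseIdx_of_lt hj]; omega
  have hdj : A.getD j 0 = A[j] := List.getD_eq_getElem A 0 hj
  have hdi : A.getD i 0 = A[i] := List.getD_eq_getElem A 0 hi
  have p1 : A.Perm (A[j] :: A.eraseIdx j) :=
    (List.perm_cons_erase (List.getElem_mem hj)).trans
      ((List.erase_getElem hj).cons A[j])
  have p2 : (A.eraseIdx j).Perm (A[i] :: (A.eraseIdx j).eraseIdx i) := by
    have := (List.perm_cons_erase (List.getElem_mem hi')).trans
      ((List.erase_getElem hi').cons (A.eraseIdx j)[i])
    rwa [List.getElem_eraseIdx_of_lt hi' hij] at this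
  constructor
  · rw [hdi, hdj]
    have : A.Perm (A[i] :: A[j] :: (A.eraseIdx j).eraseIdx i) := by
      refine p1.trans ?_
      refine ((p2.cons A[j]).trans ?_)
      exact List.Perm.swap _ _ _
    exact Quot.sound this
  · show (↑(((A.eraseIdx j).eraseIdx i) ++ [A.getD i 0 + A.getD j 0]) : Multiset V) = _
    have : (((A.eraseIdx j).eraseIdx i) ++ [A.getD i 0 + A.getD j 0]).Perm
        ((A.getD i 0 + A.getD j 0) :: (A.eraseIdx j).eraseIdx i) :=
      List.perm_append_comm.trans (List.Perm.refl _)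
    exact Quot.sound this

lemma muAux_triple (y : ℝ) (n : ℕ) (hn : 3 ≤ n) (x z w : V) :
    muAux y n [x, z, w] = brP y |wedge x z| := by
  obtain ⟨m, rfl⟩ : ∃ m, n = m + 1 := ⟨n - 1, by omega⟩
  rw [muAux]
  norm_num

lemma bridge (y : ℝ) : ∀ n (A : List V), A.sum = 0 → A.length ≤ n →
    muAux y n A = Fm y n (↑A) := by
  intro n
  induction n with
  | zero =>
    intro A _ hlen
    have hA : A = [] := List.length_eq_zero_iff.mp (by omega)
    subst hA
    rfl
  | succ n ih =>
    intro A hsum hlen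
    by_cases h2 : A.length ≤ 2
    · rw [muAux, if_pos h2, Fm_two]
      rwa [Multiset.coe_card]
    by_cases h3 : A.length = 3
    · obtain ⟨p, q, s, rfl⟩ := List.length_eq_three.mp h3
      have hbal : p + q + s = 0 := by
        rw [show p + q + s = p + (q + (s + 0)) by abel]
        exact hsum
      rw [muAux_triple y (n+1) (by omega) p q s,
        show ((([p,q,s] : List V)) : Multiset V) = p ::ₘ q ::ₘ s ::ₘ 0 from rfl,
        Fm_three y n p q s hbal]
    · have h4 : 4 ≤ A.length := by omega
      set h : V → V → ℝ := fun x z =>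
        brP y |wedge x z| * Fm y n ((x + z) ::ₘ ((↑A : Multiset V).erase x).erase z) with hh
      have hsym : ∀ x z, h x z = h z x := by
        intro x z
        rw [hh]
        simp only
        rw [abs_wedge_comm, add_comm x z, Multiset.erase_comm]
      have key : ∀ i ∈ Finset.range A.length, ∀ j ∈ Finset.Ioo i A.length,
          muAux y n (pairReduce A i j) *
            muAux y n [A.getD i 0, A.getD j 0, -(A.getD i 0 + A.getD j 0)]
          = h (A.getD i 0) (A.getD j 0) := by
        intro i hi j hj
        rw [Finset.mem_Ioo] at hj
        rw [Finset.mem_range] at hi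
        obtain ⟨hM2, hM⟩ := pairReduce_multiset A i j hj.1 hj.2
        have hT : ((↑A : Multiset V).erase (A.getD i 0)).erase (A.getD j 0)
            = ↑((A.eraseIdx j).eraseIdx i) := by
          rw [hM2, Multiset.erase_cons_head, Multiset.erase_cons_head]
        have hlen2 : (pairReduce A i j).length ≤ n := by
          unfold pairReduce
          rw [List.length_append, List.length_eraseIdx_of_lt, List.length_eraseIdx_of_lt hj.2]
          · simp; omega
          · rw [List.length_eraseIdx_of_lt hj.2]; omega
        have e2 : A.getD i 0 + (A.getD j 0 + ((↑((A.eraseIdx j).eraseIdx i) : Multiset V)).sum)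
            = 0 := by
          rw [← Multiset.sum_cons, ← Multiset.sum_cons, ← hM2, Multiset.sum_coe]
          exact hsum
        have hsum2 : (pairReduce A i j).sum = 0 := by
          rw [← Multiset.sum_coe (pairReduce A i j), hM, Multiset.sum_cons]
          rw [show A.getD i 0 + A.getD j 0 + ((↑((A.eraseIdx j).eraseIdx i) : Multiset V)).sum
            = A.getD i 0 + (A.getD j 0 + ((↑((A.eraseIdx j).eraseIdx i) : Multiset V)).sum)
            by abel]
          exact e2
        rw [ih (pairReduce A i j) hsum2 hlen2, muAux_triple y n (by omega), hM, ← hT]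
        simp only [hh]
        ring
      rw [muAux, if_neg (by omega), if_neg h3, Finset.sum_congr rfl
        (fun i hi => Finset.sum_congr rfl (fun j hj => key i hi j hj))]
      have hms := list_pairs_msum h hsym A
      rw [Fm_big y n _ (by rwa [Multiset.coe_card])]
      simp only [hh] at hms ⊢
      linarith

lemma Fm_cons_expand (y : ℝ) (n : ℕ) (b : V) (R : Multiset V) (h4 : 3 ≤ Multiset.card R) :
    Fm y (n+1) (b ::ₘ R) =
      msum R (fun q => brP y |wedge b q| * Fm y n ((b + q) ::ₘ R.erase q))
      + msum R (fun p => msum (R.erase p) (fun q =>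
          brP y |wedge p q| * Fm y n ((p + q) ::ₘ b ::ₘ (R.erase p).erase q))) / 2 := by
  have hcard : 4 ≤ Multiset.card (b ::ₘ R) := by simp; omega
  rw [Fm_big y n _ hcard, msum_cons, Multiset.erase_cons_head]
  have tail : ∀ p ∈ R,
      msum ((b ::ₘ R).erase p) (fun z =>
        brP y |wedge p z| * Fm y n ((p + z) ::ₘ ((b ::ₘ R).erase p).erase z))
      = (brP y |wedge b p| * Fm y n ((b + p) ::ₘ R.erase p)
        + msum (R.erase p) (fun q =>
            brP y |wedge p q| * Fm y n ((p + q) ::ₘ b ::ₘ (R.erase p).erase q))) := by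
    intro p hp
    rw [Multiset.erase_cons_tail_of_mem hp, msum_cons, Multiset.erase_cons_head]
    congr 1
    · rw [abs_wedge_comm p b, add_comm p b]
    · exact msum_congr (fun q hq => by rw [Multiset.erase_cons_tail_of_mem hq])
  rw [msum_congr tail, msum_add]
  ring

lemma keyG (y : ℝ) (hy0 : 0 < y) (hy1 : y ≠ 1) :
    ∀ (m : ℕ) (a₀ : V) (M : Multiset V), 2 ≤ m → Multiset.card M = m → a₀ + M.sum = 0 →
    msum M (fun x => brM y (wedge a₀ x) * Fm y m ((a₀ + x) ::ₘ M.erase x)) = 0 := by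
  intro m
  induction m using Nat.strong_induction_on with
  | _ m ih =>
    intro a₀ M hm hcard hbal
    rcases eq_or_lt_of_le hm with hm2 | hm2
    · -- m = 2
      subst hm2
      obtain ⟨u, v, huv⟩ := Multiset.card_eq_two.mp hcard
      have hM : M = u ::ₘ v ::ₘ 0 := by rw [huv]; rfl
      subst hM
      rw [msum_cons, msum_cons, msum_zero, Multiset.erase_cons_head,
        Multiset.erase_cons_tail_of_mem (Multiset.mem_cons_self v 0),
        Multiset.erase_cons_head]
      rw [Fm_two y 1 _ (by simp), Fm_two y 1 _ (by simp)]
      have hv : v = -(a₀ + u) := by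
        have hbal' : a₀ + (u + (v + 0)) = 0 := hbal
        linear_combination hbal'
      subst hv
      rw [show wedge a₀ (-(a₀ + u)) = -wedge a₀ u by simp [wedge]; ring, brM_neg]
      ring
    rcases (by omega : m = 3 ∨ 4 ≤ m) with hm3 | hm4
    · -- m = 3
      subst hm3
      obtain ⟨u, v, w, huvw⟩ := Multiset.card_eq_three.mp hcard
      have hM : M = u ::ₘ v ::ₘ w ::ₘ 0 := by rw [huvw]; rfl
      subst hM
      have e1 : (u ::ₘ v ::ₘ w ::ₘ 0).erase u = v ::ₘ w ::ₘ 0 := Multiset.erase_cons_head _ _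
      have e2 : (u ::ₘ v ::ₘ w ::ₘ 0).erase v = u ::ₘ w ::ₘ 0 := by
        rw [Multiset.erase_cons_tail_of_mem (Multiset.mem_cons_self v _),
          Multiset.erase_cons_head]
      have e3 : (u ::ₘ v ::ₘ w ::ₘ 0).erase w = u ::ₘ v ::ₘ 0 := by
        rw [Multiset.erase_cons_tail_of_mem (by simp), Multiset.erase_cons_tail_of_mem (by simp),
          Multiset.erase_cons_head]
      rw [msum_cons, msum_cons, msum_cons, msum_zero, e1, e2, e3]
      have hbal' : a₀ + (u + (v + (w + 0))) = 0 := hbal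
      rw [show (3:ℕ) = 2 + 1 from rfl,
        Fm_three y 2 _ _ _ (by linear_combination hbal'),
        Fm_three y 2 _ _ _ (by linear_combination hbal'),
        Fm_three y 2 _ _ _ (by linear_combination hbal')]
      rw [brP_abs, brP_abs, brP_abs]
      have hw : w = -(a₀ + u + v) := by linear_combination hbal'
      subst hw
      rw [show wedge (a₀ + u) v = wedge a₀ v + wedge u v by simp [wedge]; ring,
        show wedge (a₀ + v) u = wedge a₀ u - wedge u v by simp [wedge]; ring,
        show wedge a₀ (-(a₀ + u + v)) = -(wedge a₀ u + wedge a₀ v) by simp [wedge]; ring,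
        show wedge (a₀ + -(a₀ + u + v)) u = wedge u v by simp [wedge]; ring,
        brM_neg]
      linear_combination starId hy0 hy1 (wedge a₀ u) (wedge a₀ v) (wedge u v)
    · -- m ≥ 4
      obtain ⟨n, rfl⟩ : ∃ n, m = n + 1 := ⟨m - 1, by omega⟩
      have hn3 : 3 ≤ n := by omega
      have expand : ∀ x ∈ M,
          brM y (wedge a₀ x) * Fm y (n+1) ((a₀ + x) ::ₘ M.erase x)
          = brM y (wedge a₀ x) *
              msum (M.erase x) (fun q => brP y |wedge (a₀ + x) q| *
                Fm y n ((a₀ + x + q) ::ₘ (M.erase x).erase q))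
            + brM y (wedge a₀ x) *
              msum (M.erase x) (fun p => msum ((M.erase x).erase p) (fun q =>
                brP y |wedge p q| *
                  Fm y n ((p + q) ::ₘ (a₀ + x) ::ₘ ((M.erase x).erase p).erase q))) / 2 := by
        intro x hx
        rw [Fm_cons_expand y n (a₀ + x) (M.erase x) (by
          have h1 := Multiset.card_erase_of_mem hx
          rw [hcard] at h1
          simp only [Nat.pred_eq_sub_one] at h1
          omega)]
        ring
      rw [msum_congr expand, msum_add]
      -- B part
      have hB1 : msum M (fun x => brM y (wedge a₀ x) *
            msum (M.erase x) (fun q => brP y |wedge (a₀ + x) q| *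
              Fm y n ((a₀ + x + q) ::ₘ (M.erase x).erase q)))
          = msum M (fun x => msum (M.erase x) (fun q => brM y (wedge a₀ x) *
              (brP y |wedge (a₀ + x) q| * Fm y n ((a₀ + x + q) ::ₘ (M.erase x).erase q)))) :=
        msum_congr (fun x _ => (msum_mul _ _ _).symm)
      have hTU : ∀ x ∈ M, ∀ q ∈ M.erase x,
          brM y (wedge a₀ x) *
              (brP y |wedge (a₀ + x) q| * Fm y n ((a₀ + x + q) ::ₘ (M.erase x).erase q))
            + brM y (wedge a₀ q) *
              (brP y |wedge (a₀ + q) x| * Fm y n ((a₀ + q + x) ::ₘ (M.erase q).erase x))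
          = brM y (wedge a₀ x + wedge a₀ q) *
              (brP y (wedge x q) * Fm y n ((a₀ + x + q) ::ₘ (M.erase x).erase q)) := by
        intro x hx q hq
        rw [brP_abs y (wedge (a₀ + x) q), brP_abs y (wedge (a₀ + q) x)]
        rw [show wedge (a₀ + x) q = wedge a₀ q + wedge x q by simp [wedge]; ring,
            show wedge (a₀ + q) x = wedge a₀ x - wedge x q by simp [wedge]; ring,
            show a₀ + q + x = a₀ + x + q by ring,
            Multiset.erase_comm M q x]
        linear_combination starId hy0 hy1 (wedge a₀ x) (wedge a₀ q) (wedge x q) *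
          Fm y n ((a₀ + x + q) ::ₘ (M.erase x).erase q)
      have hBB : 2 * msum M (fun x => msum (M.erase x) (fun q => brM y (wedge a₀ x) *
              (brP y |wedge (a₀ + x) q| * Fm y n ((a₀ + x + q) ::ₘ (M.erase x).erase q))))
          = msum M (fun x => msum (M.erase x) (fun q => brM y (wedge a₀ x + wedge a₀ q) *
              (brP y (wedge x q) * Fm y n ((a₀ + x + q) ::ₘ (M.erase x).erase q)))) := by
        calc 2 * msum M (fun x => msum (M.erase x) (fun q => brM y (wedge a₀ x) *
              (brP y |wedge (a₀ + x) q| * Fm y n ((a₀ + x + q) ::ₘ (M.erase x).erase q))))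
            = msum M (fun x => msum (M.erase x) (fun q => brM y (wedge a₀ x) *
                (brP y |wedge (a₀ + x) q| * Fm y n ((a₀ + x + q) ::ₘ (M.erase x).erase q))))
              + msum M (fun q => msum (M.erase q) (fun x => brM y (wedge a₀ x) *
                (brP y |wedge (a₀ + x) q| * Fm y n ((a₀ + x + q) ::ₘ (M.erase x).erase q)))) := by
              rw [msum_exchange (fun x q => brM y (wedge a₀ x) *
                (brP y |wedge (a₀ + x) q| * Fm y n ((a₀ + x + q) ::ₘ (M.erase x).erase q))) M]
              ring
          _ = msum M (fun x => msum (M.erase x) (fun q => brM y (wedge a₀ x) *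
                (brP y |wedge (a₀ + x) q| * Fm y n ((a₀ + x + q) ::ₘ (M.erase x).erase q))
                + brM y (wedge a₀ q) *
                (brP y |wedge (a₀ + q) x| * Fm y n ((a₀ + q + x) ::ₘ (M.erase q).erase x)))) := by
              rw [msum_congr (fun x (_ : x ∈ M) => msum_add (M.erase x) _ _)]
              rw [msum_add]
          _ = msum M (fun x => msum (M.erase x) (fun q => brM y (wedge a₀ x + wedge a₀ q) *
                (brP y (wedge x q) * Fm y n ((a₀ + x + q) ::ₘ (M.erase x).erase q)))) :=
              msum_congr (fun x hx => msum_congr (fun q hq => hTU x hx q hq))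
      -- A part
      have hA1 : msum M (fun x => brM y (wedge a₀ x) *
            msum (M.erase x) (fun p => msum ((M.erase x).erase p) (fun q =>
              brP y |wedge p q| *
                Fm y n ((p + q) ::ₘ (a₀ + x) ::ₘ ((M.erase x).erase p).erase q))) / 2)
          = msum M (fun x => msum (M.erase x) (fun p => msum ((M.erase p).erase x) (fun q =>
              brP y |wedge p q| * (brM y (wedge a₀ x) *
                Fm y n ((a₀ + x) ::ₘ (p + q) ::ₘ ((M.erase p).erase q).erase x))))) / 2 := by
        rw [← msum_div]
        apply msum_congr; intro x hx
        congr 1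
        rw [← msum_mul]
        apply msum_congr; intro p hp
        rw [show (M.erase x).erase p = (M.erase p).erase x from Multiset.erase_comm M x p,
          ← msum_mul]
        apply msum_congr; intro q hq
        rw [Multiset.erase_comm (M.erase p) x q, Multiset.cons_swap]
        ring
      have hA2 : msum M (fun x => msum (M.erase x) (fun p => msum ((M.erase p).erase x) (fun q =>
              brP y |wedge p q| * (brM y (wedge a₀ x) *
                Fm y n ((a₀ + x) ::ₘ (p + q) ::ₘ ((M.erase p).erase q).erase x)))))
          = msum M (fun p => msum (M.erase p) (fun q => msum ((M.erase p).erase q) (fun x =>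
              brP y |wedge p q| * (brM y (wedge a₀ x) *
                Fm y n ((a₀ + x) ::ₘ (p + q) ::ₘ ((M.erase p).erase q).erase x))))) := by
        rw [msum_exchange (fun x p => msum ((M.erase p).erase x) (fun q =>
              brP y |wedge p q| * (brM y (wedge a₀ x) *
                Fm y n ((a₀ + x) ::ₘ (p + q) ::ₘ ((M.erase p).erase q).erase x)))) M]
        apply msum_congr; intro p hp
        exact msum_exchange (fun x q => brP y |wedge p q| * (brM y (wedge a₀ x) *
                Fm y n ((a₀ + x) ::ₘ (p + q) ::ₘ ((M.erase p).erase q).erase x))) (M.erase p)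
      have hIHapp : ∀ p ∈ M, ∀ q ∈ M.erase p,
          msum ((M.erase p).erase q) (fun x => brM y (wedge a₀ x) *
            Fm y n ((a₀ + x) ::ₘ (p + q) ::ₘ ((M.erase p).erase q).erase x))
          = -(brM y (wedge a₀ (p + q)) * Fm y n ((a₀ + (p + q)) ::ₘ (M.erase p).erase q)) := by
        intro p hp q hq
        have hps : p + (M.erase p).sum = M.sum := by
          rw [← Multiset.sum_cons, Multiset.cons_erase hp]
        have hqs : q + ((M.erase p).erase q).sum = (M.erase p).sum := by
          rw [← Multiset.sum_cons, Multiset.cons_erase hq]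
        have hcard' : Multiset.card ((p + q) ::ₘ (M.erase p).erase q) = n := by
          rw [Multiset.card_cons]
          have h1 := Multiset.card_erase_of_mem hp
          have h2 := Multiset.card_erase_of_mem hq
          rw [hcard] at h1
          rw [h1] at h2
          simp only [Nat.pred_eq_sub_one] at h1 h2
          omega
        have hbal' : a₀ + ((p + q) ::ₘ (M.erase p).erase q).sum = 0 := by
          rw [Multiset.sum_cons]
          linear_combination hbal + hps + hqs
        have h0 := ih n (by omega) a₀ ((p + q) ::ₘ (M.erase p).erase q) (by omega) hcard' hbal'
        rw [msum_cons, Multiset.erase_cons_head] at h0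
        have h0' : msum ((M.erase p).erase q) (fun x => brM y (wedge a₀ x) *
              Fm y n ((a₀ + x) ::ₘ ((p + q) ::ₘ (M.erase p).erase q).erase x))
            = msum ((M.erase p).erase q) (fun x => brM y (wedge a₀ x) *
              Fm y n ((a₀ + x) ::ₘ (p + q) ::ₘ ((M.erase p).erase q).erase x)) :=
          msum_congr (fun x hx => by rw [Multiset.erase_cons_tail_of_mem hx])
        rw [h0'] at h0
        linarith
      have hAfinal : msum M (fun p => msum (M.erase p) (fun q => msum ((M.erase p).erase q)
            (fun x => brP y |wedge p q| * (brM y (wedge a₀ x) *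
              Fm y n ((a₀ + x) ::ₘ (p + q) ::ₘ ((M.erase p).erase q).erase x)))))
          = - msum M (fun p => msum (M.erase p) (fun q => brM y (wedge a₀ p + wedge a₀ q) *
              (brP y (wedge p q) * Fm y n ((a₀ + p + q) ::ₘ (M.erase p).erase q)))) := by
        rw [← msum_neg]
        apply msum_congr; intro p hp
        rw [← msum_neg]
        apply msum_congr; intro q hq
        rw [msum_mul ((M.erase p).erase q) (brP y |wedge p q|) _]
        rw [hIHapp p hp q hq]
        rw [brP_abs y (wedge p q),
          show wedge a₀ (p + q) = wedge a₀ p + wedge a₀ q by simp [wedge]; ring,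
          show a₀ + (p + q) = a₀ + p + q by ring]
        ring
      rw [hB1, hA1, hA2, hAfinal]
      -- note the Fm arg forms differ: hBB uses (a₀ + x + q) while hAfinal RHS uses (a₀ + p + q); α-equivalent
      linarith [hBB]

/-- if `a₀ + a₁ + … + a_r = 0` then
`Σ_{j=1}^{r} [a₀ ∧ a_j]⁻_y · μ⁺_y(A_j) = 0`, where
`A_j = (a₀ + a_j, (a_k)_{1 ≤ k ≤ r, k ≠ j})`. -/
theorem stmt1 (y : ℝ) (hy0 : 0 < y) (hy1 : y ≠ 1)
    (r : ℕ) (hr : 2 ≤ r)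
    (a : ℕ → ℤ × ℤ) (hbal : ∑ s ∈ Finset.range (r + 1), a s = 0) :
    ∑ j ∈ Finset.Icc 1 r,
      brM y (wedge (a 0) (a j)) *
        muPlus y ((a 0 + a j) :: (((Finset.Icc 1 r).erase j).sort (· ≤ ·)).map a) = 0 := by
  set s := Finset.Icc 1 r with hs
  set M : Multiset (ℤ × ℤ) := Multiset.map a s.val with hM
  have hcardM : Multiset.card M = r := by
    rw [hM, Multiset.card_map]
    show Multiset.card (Finset.Icc 1 r).val = r
    rw [← Finset.card_def, Nat.card_Icc]
    omega
  have h0 : a 0 + ∑ j ∈ s, a j = 0 := by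
    have hr0 : Finset.range (r + 1) = insert 0 s := by
      ext k
      simp only [Finset.mem_range, Finset.mem_insert, hs, Finset.mem_Icc]
      omega
    rw [hr0, Finset.sum_insert (by simp [hs])] at hbal
    exact hbal
  have hMsum : M.sum = ∑ j ∈ s, a j := rfl
  have hbalM : a 0 + M.sum = 0 := by rw [hMsum]; exact h0
  have key : ∀ j ∈ s,
      brM y (wedge (a 0) (a j)) *
        muPlus y ((a 0 + a j) :: ((s.erase j).sort (· ≤ ·)).map a)
      = brM y (wedge (a 0) (a j)) * Fm y r ((a 0 + a j) ::ₘ M.erase (a j)) := by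
    intro j hj
    set L : List (ℤ × ℤ) := (a 0 + a j) :: ((s.erase j).sort (· ≤ ·)).map a with hL
    have hcoe_sort : (↑((s.erase j).sort (· ≤ ·)) : Multiset ℕ) = (s.erase j).val :=
      Finset.sort_eq _ _
    have hcoeL : (↑L : Multiset (ℤ × ℤ)) = (a 0 + a j) ::ₘ Multiset.map a (s.erase j).val := by
      rw [hL]
      show (a 0 + a j) ::ₘ (↑(((s.erase j).sort (· ≤ ·)).map a) : Multiset (ℤ × ℤ)) = _
      congr 1
      rw [← Multiset.map_coe, hcoe_sort]
    have hjval : j ∈ s.val := hj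
    have herase : Multiset.map a (s.erase j).val = M.erase (a j) := by
      rw [Finset.erase_val, hM]
      have hcons : j ::ₘ s.val.erase j = s.val := Multiset.cons_erase hjval
      rw [show Multiset.map a s.val = a j ::ₘ Multiset.map a (s.val.erase j) by
        rw [← Multiset.map_cons, hcons], Multiset.erase_cons_head]
    have hlenL : L.length = r := by
      rw [hL, List.length_cons, List.length_map, Finset.length_sort,
        Finset.card_erase_of_mem hj]
      have : s.card = r := by rw [hs, Nat.card_Icc]; omega
      rw [this]
      omega
    have hsumL : L.sum = 0 := by
      have h1 : (↑L : Multiset (ℤ × ℤ)).sum = L.sum := Multiset.sum_coe _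
      rw [hcoeL, Multiset.sum_cons, herase] at h1
      rw [← h1]
      have h2 : a j + (M.erase (a j)).sum = M.sum := by
        rw [← Multiset.sum_cons, Multiset.cons_erase (by
          rw [hM]
          exact Multiset.mem_map_of_mem a hjval)]
      linear_combination hbalM + h2
    have := bridge y L.length L hsumL (le_refl _)
    rw [muPlus, this, hlenL, hcoeL, herase]
  rw [Finset.sum_congr rfl key]
  have hfin : ∑ j ∈ s, brM y (wedge (a 0) (a j)) * Fm y r ((a 0 + a j) ::ₘ M.erase (a j))
      = msum M (fun x => brM y (wedge (a 0) x) * Fm y r ((a 0 + x) ::ₘ M.erase x)) := by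
    rw [msum, hM, Multiset.map_map]
    rfl
  rw [hfin]
  exact keyG y hy0 hy1 r (a 0) M hr hcardM hbalM
end

section
/- Let R be a commutative ring, z ∈ R invertible, N ≥ 1 an integer, a₁, …, a_N vectors in ℤ², and set a₀ = −(a₁ + … + a_N). For each k ∈ {1, …, N} let C_k denote the sequence of the N − 1 vectors a_s with s ≠ k. Then Σ_{k=1}^{N} (z^{a₀ ∧ a_k} − z^{a_k ∧ a₀}) · Σ_{τ} z^{Λ_{C_k}(τ)} = 0, where the inner sum runs over all permutations τ of the index set of C_k. -/
/-- `Λ(σ) = Σ_{s<t} a_{σ(s)} ∧ a_{σ(t)}` for a permutation `σ` of a linearly ordered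
finite index set. -/
def Lam {ι : Type*} [LinearOrder ι] [Fintype ι] (a : ι → ℤ × ℤ) (σ : Equiv.Perm ι) : ℤ :=
  ∑ p ∈ Finset.univ.filter (fun p : ι × ι => p.1 < p.2), wedge (a (σ p.1)) (a (σ p.2))

section Aux

open Finset

variable {n : ℕ}

lemma wedge_sum_right {ι : Type*} (x : ℤ × ℤ) (s : Finset ι) (f : ι → ℤ × ℤ) :
    wedge x (∑ i ∈ s, f i) = ∑ i ∈ s, wedge x (f i) := by
  simp [wedge, Prod.fst_sum, Prod.snd_sum, Finset.mul_sum, Finset.sum_sub_distrib]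

lemma wedge_sum_left {ι : Type*} (x : ℤ × ℤ) (s : Finset ι) (f : ι → ℤ × ℤ) :
    wedge (∑ i ∈ s, f i) x = ∑ i ∈ s, wedge (f i) x := by
  simp [wedge, Prod.fst_sum, Prod.snd_sum, Finset.sum_mul, Finset.sum_sub_distrib]

lemma card_ne_aux (k : Fin (n + 1)) : Fintype.card {s : Fin (n + 1) // s ≠ k} = n := by
  simp [Fintype.card_subtype_compl]

/-- The unique order isomorphism between the complements of two points in `Fin (n+1)`. -/
noncomputable def gIso (p k : Fin (n + 1)) :
    {t : Fin (n + 1) // t ≠ p} ≃o {s : Fin (n + 1) // s ≠ k} :=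
  ((monoEquivOfFin _ (card_ne_aux p)).symm.trans (monoEquivOfFin _ (card_ne_aux k)) :
    _ ≃o _)

/-- Extend a permutation of `{s // s ≠ k}` to a permutation of `Fin (n+1)` sending `p` to `k`. -/
noncomputable def Phi (p k : Fin (n + 1)) (τ : Equiv.Perm {s : Fin (n + 1) // s ≠ k}) :
    Equiv.Perm (Fin (n + 1)) where
  toFun t := if h : t = p then k else (τ (gIso p k ⟨t, h⟩)).1
  invFun s := if h : s = k then p else ((gIso p k).symm (τ.symm ⟨s, h⟩)).1
  left_inv t := by
    by_cases h : t = p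
    · simp [h]
    · dsimp only
      rw [dif_neg h, dif_neg (τ (gIso p k ⟨t, h⟩)).2]
      simp
  right_inv s := by
    by_cases h : s = k
    · simp [h]
    · dsimp only
      rw [dif_neg h, dif_neg ((gIso p k).symm (τ.symm ⟨s, h⟩)).2]
      simp

lemma Phi_apply_self (p k : Fin (n + 1)) (τ : Equiv.Perm {s : Fin (n + 1) // s ≠ k}) :
    Phi p k τ p = k := dif_pos rfl

lemma Phi_apply_ne (p k : Fin (n + 1)) (τ : Equiv.Perm {s : Fin (n + 1) // s ≠ k})
    {t : Fin (n + 1)} (h : t ≠ p) : Phi p k τ t = (τ (gIso p k ⟨t, h⟩)).1 := dif_neg h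

/-- The inverse of `Phi p k` on permutations `σ` with `σ p = k`. -/
noncomputable def Psi (p k : Fin (n + 1)) (σ : Equiv.Perm (Fin (n + 1))) (hσ : σ p = k) :
    Equiv.Perm {s : Fin (n + 1) // s ≠ k} :=
  (gIso p k).toEquiv.symm.trans (σ.subtypeEquiv (fun t => by
    rw [← hσ]
    exact Iff.symm σ.injective.ne_iff))

lemma Psi_Phi (p k : Fin (n + 1)) (τ : Equiv.Perm {s : Fin (n + 1) // s ≠ k}) :
    Psi p k (Phi p k τ) (Phi_apply_self p k τ) = τ := by
  ext s
  simp only [Psi, Equiv.trans_apply, Equiv.subtypeEquiv_apply]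
  rw [Phi_apply_ne p k τ (((gIso p k).toEquiv.symm s).2)]
  simp

lemma Phi_Psi (p k : Fin (n + 1)) (σ : Equiv.Perm (Fin (n + 1))) (hσ : σ p = k) :
    Phi p k (Psi p k σ hσ) = σ := by
  ext t
  by_cases h : t = p
  · rw [h, Phi_apply_self, hσ]
  · rw [Phi_apply_ne p k _ h]
    simp [Psi]

/-- Fibering the sum over all permutations according to the image of a fixed position `p`. -/
lemma sum_perm_eq (p : Fin (n + 1)) {M : Type*} [AddCommMonoid M]
    (F : Equiv.Perm (Fin (n + 1)) → M) :
    ∑ σ : Equiv.Perm (Fin (n + 1)), F σ =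
      ∑ k : Fin (n + 1), ∑ τ : Equiv.Perm {s : Fin (n + 1) // s ≠ k}, F (Phi p k τ) := by
  classical
  rw [← Finset.sum_fiberwise (univ : Finset (Equiv.Perm (Fin (n + 1)))) (fun σ => σ p) F]
  refine Finset.sum_congr rfl fun k _ => ?_
  refine Finset.sum_bij' (fun σ hσ => Psi p k σ (Finset.mem_filter.1 hσ).2)
    (fun τ _ => Phi p k τ) (fun σ hσ => mem_univ _)
    (fun τ _ => Finset.mem_filter.2 ⟨mem_univ _, Phi_apply_self p k τ⟩)
    (fun σ hσ => Phi_Psi p k σ (Finset.mem_filter.1 hσ).2)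
    (fun τ _ => Psi_Phi p k τ)
    (fun σ hσ => by rw [Phi_Psi p k σ (Finset.mem_filter.1 hσ).2])

lemma lam_Phi_zero (a : Fin (n + 1) → ℤ × ℤ) (k : Fin (n + 1))
    (τ : Equiv.Perm {s : Fin (n + 1) // s ≠ k}) :
    Lam a (Phi 0 k τ) =
      wedge (a k) ((∑ s, a s) - a k) +
        Lam (fun s : {s : Fin (n + 1) // s ≠ k} => a s.1) τ := by
  classical
  set σ := Phi 0 k τ with hσdef
  have hσ0 : σ 0 = k := Phi_apply_self 0 k τ
  unfold Lam
  rw [← Finset.sum_filter_add_sum_filter_not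
      (univ.filter (fun q : Fin (n + 1) × Fin (n + 1) => q.1 < q.2))
      (fun q => q.1 = 0)]
  congr 1
  · -- pairs (0, t) : contribute wedge (a k) (∑ s - a k)
    have step1 : ∑ q ∈ (univ.filter fun q : Fin (n + 1) × Fin (n + 1) => q.1 < q.2).filter
          (fun q => q.1 = 0), wedge (a (σ q.1)) (a (σ q.2))
        = ∑ t ∈ univ.filter (fun t : Fin (n + 1) => t ≠ 0), wedge (a k) (a (σ t)) := by
      refine Finset.sum_bij' (fun q _ => q.2) (fun t _ => ((0 : Fin (n + 1)), t))
        ?_ ?_ ?_ ?_ ?_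
      · intro q hq
        have h1 := Finset.mem_filter.1 hq
        have h2 := Finset.mem_filter.1 h1.1
        refine Finset.mem_filter.2 ⟨mem_univ _, ?_⟩
        rw [← Fin.pos_iff_ne_zero]
        have := h2.2
        rw [h1.2] at this
        exact this
      · intro t ht
        refine Finset.mem_filter.2 ⟨Finset.mem_filter.2 ⟨mem_univ _, ?_⟩, rfl⟩
        exact Fin.pos_iff_ne_zero.2 (Finset.mem_filter.1 ht).2
      · intro q hq
        have h1 := Finset.mem_filter.1 hq
        exact Prod.ext h1.2.symm rfl
      · intro t _; rfl
      · intro q hq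
        have h1 := Finset.mem_filter.1 hq
        rw [h1.2, hσ0]
    rw [step1, ← wedge_sum_right]
    congr 1
    have reidx : ∑ t ∈ univ.filter (fun t : Fin (n + 1) => t ≠ 0), a (σ t)
        = ∑ s ∈ univ.filter (fun s : Fin (n + 1) => s ≠ k), a s := by
      refine Finset.sum_bij' (fun t _ => σ t) (fun s _ => σ.symm s) ?_ ?_ ?_ ?_ ?_
      · intro t ht
        refine Finset.mem_filter.2 ⟨mem_univ _, fun h => (Finset.mem_filter.1 ht).2 ?_⟩
        exact σ.injective (h.trans hσ0.symm)
      · intro s hs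
        refine Finset.mem_filter.2 ⟨mem_univ _, fun h => (Finset.mem_filter.1 hs).2 ?_⟩
        rw [← hσ0, ← h]; simp
      · intro t _; simp
      · intro s _; simp
      · intro t _; rfl
    rw [reidx, Finset.filter_ne', Finset.sum_erase_eq_sub (mem_univ k)]
  · -- pairs with both coordinates nonzero : contribute Lam of the restricted sequence
    refine Finset.sum_bij
      (fun q hq => ((gIso 0 k ⟨q.1, (Finset.mem_filter.1 hq).2⟩ : {s : Fin (n + 1) // s ≠ k}),
        (gIso 0 k ⟨q.2, ?_⟩ : {s : Fin (n + 1) // s ≠ k})))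
      ?_ ?_ ?_ ?_
    · -- q.2 ≠ 0
      have h1 := Finset.mem_filter.1 hq
      have h2 := Finset.mem_filter.1 h1.1
      have : (0 : Fin (n + 1)) < q.1 := Fin.pos_iff_ne_zero.2 h1.2
      exact Fin.pos_iff_ne_zero.1 (this.trans h2.2)
    · -- membership in target
      intro q hq
      have h1 := Finset.mem_filter.1 hq
      have h2 := Finset.mem_filter.1 h1.1
      refine Finset.mem_filter.2 ⟨mem_univ _, ?_⟩
      simp only []
      rw [OrderIso.lt_iff_lt]
      exact Subtype.mk_lt_mk.2 h2.2
    · -- injectivity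
      intro q1 hq1 q2 hq2 h
      have h1 := congrArg Prod.fst h
      have h2 := congrArg Prod.snd h
      simp only [] at h1 h2
      have e1 := (gIso 0 k).injective h1
      have e2 := (gIso 0 k).injective h2
      exact Prod.ext (congrArg Subtype.val e1) (congrArg Subtype.val e2)
    · -- surjectivity
      intro r hr
      have h1 := Finset.mem_filter.1 hr
      refine ⟨((((gIso 0 k).symm r.1 : {t : Fin (n + 1) // t ≠ 0}) : Fin (n + 1)),
        (((gIso 0 k).symm r.2 : {t : Fin (n + 1) // t ≠ 0}) : Fin (n + 1))), ?_, ?_⟩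
      · refine Finset.mem_filter.2 ⟨Finset.mem_filter.2 ⟨mem_univ _, ?_⟩,
          ((gIso 0 k).symm r.1).2⟩
        exact Subtype.coe_lt_coe.2 (((gIso 0 k).symm.lt_iff_lt).2 h1.2)
      · simp [Prod.ext_iff]
    · -- values agree
      intro q hq
      have h1 := Finset.mem_filter.1 hq
      have h2 := Finset.mem_filter.1 h1.1
      have hq2 : q.2 ≠ 0 := by
        have : (0 : Fin (n + 1)) < q.1 := Fin.pos_iff_ne_zero.2 h1.2
        exact Fin.pos_iff_ne_zero.1 (this.trans h2.2)
      rw [hσdef, Phi_apply_ne 0 k τ h1.2, Phi_apply_ne 0 k τ hq2]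

lemma lam_Phi_last (a : Fin (n + 1) → ℤ × ℤ) (k : Fin (n + 1))
    (τ : Equiv.Perm {s : Fin (n + 1) // s ≠ k}) :
    Lam a (Phi (Fin.last n) k τ) =
      wedge ((∑ s, a s) - a k) (a k) +
        Lam (fun s : {s : Fin (n + 1) // s ≠ k} => a s.1) τ := by
  classical
  set σ := Phi (Fin.last n) k τ with hσdef
  have hσL : σ (Fin.last n) = k := Phi_apply_self (Fin.last n) k τ
  unfold Lam
  rw [← Finset.sum_filter_add_sum_filter_not
      (univ.filter (fun q : Fin (n + 1) × Fin (n + 1) => q.1 < q.2))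
      (fun q => q.2 = Fin.last n)]
  congr 1
  · have step1 : ∑ q ∈ (univ.filter fun q : Fin (n + 1) × Fin (n + 1) => q.1 < q.2).filter
          (fun q => q.2 = Fin.last n), wedge (a (σ q.1)) (a (σ q.2))
        = ∑ t ∈ univ.filter (fun t : Fin (n + 1) => t ≠ Fin.last n),
            wedge (a (σ t)) (a k) := by
      refine Finset.sum_bij' (fun q _ => q.1) (fun t _ => (t, Fin.last n)) ?_ ?_ ?_ ?_ ?_
      · intro q hq
        have h1 := Finset.mem_filter.1 hq
        have h2 := Finset.mem_filter.1 h1.1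
        refine Finset.mem_filter.2 ⟨mem_univ _, ?_⟩
        rw [← Fin.lt_last_iff_ne_last]
        have := h2.2
        rw [h1.2] at this
        exact this
      · intro t ht
        exact Finset.mem_filter.2 ⟨Finset.mem_filter.2 ⟨mem_univ _,
          Fin.lt_last_iff_ne_last.2 (Finset.mem_filter.1 ht).2⟩, rfl⟩
      · intro q hq
        exact Prod.ext rfl (Finset.mem_filter.1 hq).2.symm
      · intro t _; rfl
      · intro q hq
        rw [(Finset.mem_filter.1 hq).2, hσL]
    rw [step1, ← wedge_sum_left]
    congr 1
    have reidx : ∑ t ∈ univ.filter (fun t : Fin (n + 1) => t ≠ Fin.last n), a (σ t)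
        = ∑ s ∈ univ.filter (fun s : Fin (n + 1) => s ≠ k), a s := by
      refine Finset.sum_bij' (fun t _ => σ t) (fun s _ => σ.symm s) ?_ ?_ ?_ ?_ ?_
      · intro t ht
        refine Finset.mem_filter.2 ⟨mem_univ _, fun h => (Finset.mem_filter.1 ht).2 ?_⟩
        exact σ.injective (h.trans hσL.symm)
      · intro s hs
        refine Finset.mem_filter.2 ⟨mem_univ _, fun h => (Finset.mem_filter.1 hs).2 ?_⟩
        rw [← hσL, ← h]; simp
      · intro t _; simp
      · intro s _; simp
      · intro t _; rfl
    rw [reidx, Finset.filter_ne', Finset.sum_erase_eq_sub (mem_univ k)]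
  · refine Finset.sum_bij
      (fun q hq => ((gIso (Fin.last n) k ⟨q.1, ?_⟩ : {s : Fin (n + 1) // s ≠ k}),
        (gIso (Fin.last n) k ⟨q.2, (Finset.mem_filter.1 hq).2⟩ : {s : Fin (n + 1) // s ≠ k})))
      ?_ ?_ ?_ ?_
    · have h1 := Finset.mem_filter.1 hq
      have h2 := Finset.mem_filter.1 h1.1
      have : q.2 < Fin.last n := Fin.lt_last_iff_ne_last.2 h1.2
      exact Fin.lt_last_iff_ne_last.1 (h2.2.trans this)
    · intro q hq
      have h1 := Finset.mem_filter.1 hq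
      have h2 := Finset.mem_filter.1 h1.1
      refine Finset.mem_filter.2 ⟨mem_univ _, ?_⟩
      simp only []
      rw [OrderIso.lt_iff_lt]
      exact Subtype.mk_lt_mk.2 h2.2
    · intro q1 hq1 q2 hq2 h
      have h1 := congrArg Prod.fst h
      have h2 := congrArg Prod.snd h
      simp only [] at h1 h2
      have e1 := (gIso (Fin.last n) k).injective h1
      have e2 := (gIso (Fin.last n) k).injective h2
      exact Prod.ext (congrArg Subtype.val e1) (congrArg Subtype.val e2)
    · intro r hr
      have h1 := Finset.mem_filter.1 hr
      refine ⟨((((gIso (Fin.last n) k).symm r.1 : {t : Fin (n + 1) // t ≠ Fin.last n}) :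
          Fin (n + 1)),
        (((gIso (Fin.last n) k).symm r.2 : {t : Fin (n + 1) // t ≠ Fin.last n}) :
          Fin (n + 1))), ?_, ?_⟩
      · refine Finset.mem_filter.2 ⟨Finset.mem_filter.2 ⟨mem_univ _, ?_⟩,
          (((gIso (Fin.last n) k).symm r.2)).2⟩
        exact Subtype.coe_lt_coe.2 (((gIso (Fin.last n) k).symm.lt_iff_lt).2 h1.2)
      · simp [Prod.ext_iff]
    · intro q hq
      have h1 := Finset.mem_filter.1 hq
      have h2 := Finset.mem_filter.1 h1.1
      have hq1 : q.1 ≠ Fin.last n := by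
        have : q.2 < Fin.last n := Fin.lt_last_iff_ne_last.2 h1.2
        exact Fin.lt_last_iff_ne_last.1 (h2.2.trans this)
      rw [hσdef, Phi_apply_ne (Fin.last n) k τ hq1, Phi_apply_ne (Fin.last n) k τ h1.2]

end Aux

/-- with `a₀ = −(a₁ + … + a_N)`,
`Σ_k (z^{a₀ ∧ a_k} − z^{a_k ∧ a₀}) · Σ_τ z^{Λ_{C_k}(τ)} = 0`, where `C_k` is the
sequence of the vectors `a_s`, `s ≠ k`, and `τ` runs over permutations of its
index set. -/
theorem stmt2 (R : Type*) [CommRing R] (z : Rˣ) (N : ℕ) (hN : 1 ≤ N)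
    (a : Fin N → ℤ × ℤ) :
    ∑ k : Fin N,
      (((z ^ wedge (-∑ s : Fin N, a s) (a k) : Rˣ) : R) -
          ((z ^ wedge (a k) (-∑ s : Fin N, a s) : Rˣ) : R)) *
        ∑ τ : Equiv.Perm {s : Fin N // s ≠ k},
          ((z ^ Lam (fun s : {s : Fin N // s ≠ k} => a s.1) τ : Rˣ) : R) = 0 := by
  obtain ⟨n, rfl⟩ : ∃ n, N = n + 1 := ⟨N - 1, (Nat.succ_pred_eq_of_pos hN).symm⟩
  have e1 : ∀ k : Fin (n + 1),
      wedge (-∑ s, a s) (a k) = wedge (a k) ((∑ s, a s) - a k) := by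
    intro k; simp only [wedge, Prod.fst_sum, Prod.snd_sum, Prod.fst_neg, Prod.snd_neg,
      Prod.fst_sub, Prod.snd_sub]; ring
  have e2 : ∀ k : Fin (n + 1),
      wedge (a k) (-∑ s, a s) = wedge ((∑ s, a s) - a k) (a k) := by
    intro k; simp only [wedge, Prod.fst_sum, Prod.snd_sum, Prod.fst_neg, Prod.snd_neg,
      Prod.fst_sub, Prod.snd_sub]; ring
  have key : ∀ p : Fin (n + 1), ∀ w : Fin (n + 1) → ℤ,
      (∀ k τ, w k + Lam (fun s : {s : Fin (n + 1) // s ≠ k} => a s.1) τ = Lam a (Phi p k τ)) →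
      ∑ k : Fin (n + 1), ((z ^ w k : Rˣ) : R) *
          ∑ τ : Equiv.Perm {s : Fin (n + 1) // s ≠ k},
            ((z ^ Lam (fun s : {s : Fin (n + 1) // s ≠ k} => a s.1) τ : Rˣ) : R)
        = ∑ σ : Equiv.Perm (Fin (n + 1)), ((z ^ Lam a σ : Rˣ) : R) := by
    intro p w hw
    rw [sum_perm_eq p (fun σ => ((z ^ Lam a σ : Rˣ) : R))]
    refine Finset.sum_congr rfl fun k _ => ?_
    rw [Finset.mul_sum]
    refine Finset.sum_congr rfl fun τ _ => ?_
    rw [← hw k τ, zpow_add, Units.val_mul]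
  simp only [e1, e2, sub_mul, Finset.sum_sub_distrib]
  rw [key 0 (fun k => wedge (a k) ((∑ s, a s) - a k)) (fun k τ => (lam_Phi_zero a k τ).symm),
    key (Fin.last n) (fun k => wedge ((∑ s, a s) - a k) (a k))
      (fun k τ => (lam_Phi_last a k τ).symm), sub_self]
end

section
/- Let R be a commutative ring, z ∈ R invertible, N ≥ 1 an integer, and a₁, …, a_N vectors in ℤ². For each k ∈ {1, …, N} let C_k denote the sequence of the N − 1 vectors a_s with s ≠ k. Then Σ_{σ ∈ S_N} z^{Λ(σ)} = Σ_{k=1}^{N} z^{Σ_{s ≠ k} a_k ∧ a_s} · Σ_{τ} z^{Λ_{C_k}(τ)}, where σ runs over all permutations of {1, …, N} and τ runs over all permutations of the index set of C_k. -/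
namespace Stmt3Aux

open Finset Equiv

variable {N : ℕ}

/-- The bottom element of `Fin N`. -/
def z0 (hN : 1 ≤ N) : Fin N := ⟨0, hN⟩

lemma z0_lt_iff (hN : 1 ≤ N) (t : Fin N) : z0 hN < t ↔ t ≠ z0 hN := by
  rw [Fin.lt_def]
  constructor
  · intro h he
    subst he
    exact lt_irrefl _ h
  · intro h
    exact Nat.pos_of_ne_zero fun h0 => h (Fin.ext h0)

lemma card_ne (k : Fin N) : Fintype.card {s : Fin N // s ≠ k} = N - 1 := by
  simp [ne_eq, Fintype.card_subtype_compl, Fintype.card_subtype_eq]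

/-- The order isomorphism between `{s // s ≠ k}` and `{t // t ≠ 0}` in `Fin N`. -/
noncomputable def ek (hN : 1 ≤ N) (k : Fin N) :
    {s : Fin N // s ≠ k} ≃o {t : Fin N // t ≠ z0 hN} :=
  (monoEquivOfFin _ (card_ne k)).symm.trans (monoEquivOfFin _ (card_ne (z0 hN)))

/-- The permutation of `Fin N` sending `0 ↦ k` and acting as `τ` (transported along order
isomorphisms) on the complements. -/
noncomputable def bwd (hN : 1 ≤ N) (k : Fin N) (τ : Perm {s : Fin N // s ≠ k}) :
    Perm (Fin N) where
  toFun x := if h : x = z0 hN then k else (τ ((ek hN k).symm ⟨x, h⟩)).1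
  invFun y := if h : y = k then z0 hN else ((ek hN k) (τ.symm ⟨y, h⟩)).1
  left_inv x := by
    dsimp only
    by_cases h : x = z0 hN
    · subst h; simp
    · rw [dif_neg h, dif_neg (τ _).2]
      simp
  right_inv y := by
    dsimp only
    by_cases h : y = k
    · subst h; simp
    · rw [dif_neg h, dif_neg ((ek hN k) _).2]
      simp

lemma bwd_z0 (hN : 1 ≤ N) (k : Fin N) (τ : Perm {s : Fin N // s ≠ k}) :
    bwd hN k τ (z0 hN) = k := by
  show (if h : z0 hN = z0 hN then k else (τ ((ek hN k).symm ⟨z0 hN, h⟩)).1) = k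
  rw [dif_pos rfl]

lemma bwd_ne (hN : 1 ≤ N) (k : Fin N) (τ : Perm {s : Fin N // s ≠ k})
    (x : Fin N) (h : x ≠ z0 hN) :
    bwd hN k τ x = (τ ((ek hN k).symm ⟨x, h⟩)).1 := by
  show (if h : x = z0 hN then k else (τ ((ek hN k).symm ⟨x, h⟩)).1) = _
  rw [dif_neg h]

/-- The inverse direction: restrict a permutation of `Fin N` to the complement of `0`. -/
noncomputable def fwd (hN : 1 ≤ N) (σ : Perm (Fin N)) :
    Perm {s : Fin N // s ≠ σ (z0 hN)} :=
  (ek hN (σ (z0 hN))).toEquiv.trans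
    (σ.subtypeEquiv fun _ => not_congr (Equiv.apply_eq_iff_eq σ).symm)

lemma bwd_fwd (hN : 1 ≤ N) (σ : Perm (Fin N)) :
    bwd hN (σ (z0 hN)) (fwd hN σ) = σ := by
  ext x
  by_cases h : x = z0 hN
  · subst h; rw [bwd_z0]
  · rw [bwd_ne hN _ _ x h]
    simp [fwd]

lemma bwd_bijective (hN : 1 ≤ N) :
    Function.Bijective
      (fun x : Σ k : Fin N, Perm {s : Fin N // s ≠ k} => bwd hN x.1 x.2) := by
  constructor
  · rintro ⟨k, τ⟩ ⟨k', τ'⟩ hEq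
    simp only at hEq
    have hk : k = k' := by
      rw [← bwd_z0 hN k τ, ← bwd_z0 hN k' τ', hEq]
    subst hk
    have hτ : τ = τ' := by
      apply Equiv.ext
      intro p
      apply Subtype.ext
      have hx : ((ek hN k p : {t : Fin N // t ≠ z0 hN}) : Fin N) ≠ z0 hN :=
        (ek hN k p).2
      have h1 := bwd_ne hN k τ _ hx
      have h2 := bwd_ne hN k τ' _ hx
      rw [hEq] at h1
      rw [h2] at h1
      have he : ((ek hN k).symm ⟨((ek hN k p : {t : Fin N // t ≠ z0 hN}) : Fin N), hx⟩) = p := by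
        simp
      rw [he] at h1
      exact h1.symm
    subst hτ
    rfl
  · intro σ
    exact ⟨⟨σ (z0 hN), fwd hN σ⟩, bwd_fwd hN σ⟩

lemma Lam_bwd (hN : 1 ≤ N) (a : Fin N → ℤ × ℤ) (k : Fin N)
    (τ : Perm {s : Fin N // s ≠ k}) :
    Lam a (bwd hN k τ) = (∑ s ∈ Finset.univ.erase k, wedge (a k) (a s))
      + Lam (fun s : {s : Fin N // s ≠ k} => a s.1) τ := by
  classical
  set σ := bwd hN k τ with hσdef
  unfold Lam
  rw [← Finset.sum_filter_add_sum_filter_not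
    (Finset.univ.filter (fun p : Fin N × Fin N => p.1 < p.2)) (fun p => p.1 = z0 hN)]
  congr 1
  · -- pairs starting at z0
    refine Finset.sum_bij' (fun p _ => σ p.2)
      (fun s _ => (z0 hN, σ.symm s)) ?_ ?_ ?_ ?_ ?_
    · intro p hp
      simp only [Finset.mem_filter, Finset.mem_univ, true_and] at hp
      obtain ⟨hlt, h1⟩ := hp
      have h2 : p.2 ≠ z0 hN := by
        intro h
        rw [h1, h] at hlt
        exact lt_irrefl _ hlt
      rw [Finset.mem_erase]
      refine ⟨?_, Finset.mem_univ _⟩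
      rw [← bwd_z0 hN k τ]
      exact fun hc => h2 (σ.injective hc)
    · intro s hs
      simp only [Finset.mem_erase, Finset.mem_univ, and_true] at hs
      have h2 : σ.symm s ≠ z0 hN := by
        intro h
        apply hs
        rw [← bwd_z0 hN k τ, ← h]
        simp [hσdef]
      simp only [Finset.mem_filter, Finset.mem_univ, true_and]
      exact ⟨(z0_lt_iff hN _).mpr h2, trivial⟩
    · intro p hp
      simp only [Finset.mem_filter, Finset.mem_univ, true_and] at hp
      rw [Equiv.symm_apply_apply]
      exact Prod.ext hp.2.symm rfl
    · intro s _
      dsimp only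
      rw [Equiv.apply_symm_apply]
    · intro p hp
      simp only [Finset.mem_filter, Finset.mem_univ, true_and] at hp
      rw [hp.2, bwd_z0 hN k τ]
  · -- pairs not involving z0
    have hmem : ∀ p : Fin N × Fin N,
        p ∈ (Finset.univ.filter (fun p : Fin N × Fin N => p.1 < p.2)).filter
            (fun p => ¬p.1 = z0 hN) →
        p.1 ≠ z0 hN ∧ p.2 ≠ z0 hN ∧ p.1 < p.2 := by
      intro p hp
      have h := Finset.mem_filter.mp hp
      have hlt := (Finset.mem_filter.mp h.1).2
      have h1 : p.1 ≠ z0 hN := h.2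
      have h2 : p.2 ≠ z0 hN :=
        (z0_lt_iff hN _).mp (lt_trans ((z0_lt_iff hN _).mpr h1) hlt)
      exact ⟨h1, h2, hlt⟩
    refine Finset.sum_bij'
      (fun p hp => (((ek hN k).symm ⟨p.1, (hmem p hp).1⟩ : {s : Fin N // s ≠ k}),
                    ((ek hN k).symm ⟨p.2, (hmem p hp).2.1⟩ : {s : Fin N // s ≠ k})))
      (fun q _ => (((ek hN k) q.1 : {t : Fin N // t ≠ z0 hN}).1,
                   ((ek hN k) q.2 : {t : Fin N // t ≠ z0 hN}).1))
      ?_ ?_ ?_ ?_ ?_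
    · intro p hp
      obtain ⟨h1, h2, hlt⟩ := hmem p hp
      simp only [Finset.mem_filter, Finset.mem_univ, true_and]
      exact (ek hN k).symm.lt_iff_lt.mpr (Subtype.mk_lt_mk.mpr hlt)
    · intro q hq
      simp only [Finset.mem_filter, Finset.mem_univ, true_and] at hq ⊢
      refine ⟨?_, ((ek hN k) q.1).2⟩
      exact Subtype.coe_lt_coe.mpr ((ek hN k).lt_iff_lt.mpr hq)
    · intro p hp
      dsimp only
      simp
    · intro q hq
      dsimp only
      simp
    · intro p hp
      obtain ⟨h1, h2, _⟩ := hmem p hp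
      dsimp only
      rw [hσdef, bwd_ne hN k τ _ h1, bwd_ne hN k τ _ h2]

end Stmt3Aux

/-- `Σ_{σ ∈ S_N} z^{Λ(σ)} =
Σ_k z^{Σ_{s≠k} a_k ∧ a_s} · Σ_τ z^{Λ_{C_k}(τ)}`, where `C_k` is the sequence of
the vectors `a_s`, `s ≠ k`. -/
theorem stmt3 (R : Type*) [CommRing R] (z : Rˣ) (N : ℕ) (hN : 1 ≤ N)
    (a : Fin N → ℤ × ℤ) :
    ∑ σ : Equiv.Perm (Fin N), ((z ^ Lam a σ : Rˣ) : R)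
      = ∑ k : Fin N,
          ((z ^ (∑ s ∈ Finset.univ.erase k, wedge (a k) (a s)) : Rˣ) : R) *
            ∑ τ : Equiv.Perm {s : Fin N // s ≠ k},
              ((z ^ Lam (fun s : {s : Fin N // s ≠ k} => a s.1) τ : Rˣ) : R) := by
  classical
  have key := Fintype.sum_bijective
    (fun x : Σ k : Fin N, Equiv.Perm {s : Fin N // s ≠ k} => Stmt3Aux.bwd hN x.1 x.2)
    (Stmt3Aux.bwd_bijective hN)
    (fun x => ((z ^ (∑ s ∈ Finset.univ.erase x.1, wedge (a x.1) (a s)) : Rˣ) : R) *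
      ((z ^ Lam (fun s : {s : Fin N // s ≠ x.1} => a s.1) x.2 : Rˣ) : R))
    (fun σ => ((z ^ Lam a σ : Rˣ) : R))
    (by
      rintro ⟨k, τ⟩
      simp only
      rw [Stmt3Aux.Lam_bwd hN a k τ, zpow_add, Units.val_mul])
  rw [← key, ← Finset.univ_sigma_univ, Finset.sum_sigma]
  refine Finset.sum_congr rfl fun k _ => ?_
  rw [Finset.mul_sum]
end

section
/- Let y > 0 be a real number and let A = (a₁, …, a_r) be a balanced finite sequence of vectors in ℤ² (i.e. a₁ + … + a_r = 0). Then for every permutation σ of {1, …, r}, μ⁺_y(a_{σ(1)}, …, a_{σ(r)}) = μ⁺_y(a₁, …, a_r); that is, μ⁺_y(A) does not depend on the order of the sequence A. -/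
open List

lemma length_pairReduce (A : List (ℤ × ℤ)) (i j : ℕ) (hij : i < j) (hj : j < A.length) :
    (pairReduce A i j).length = A.length - 1 := by
  have h1 : (A.eraseIdx j).length = A.length - 1 := by
    rw [List.length_eraseIdx]; simp [hj]
  have h2 : ((A.eraseIdx j).eraseIdx i).length = A.length - 2 := by
    rw [List.length_eraseIdx, h1]
    have : i < A.length - 1 := by omega
    simp [this]; omega
  simp [pairReduce, h2]; omega

lemma muAux_fuel (y : ℝ) : ∀ n m (A : List (ℤ × ℤ)), A.length ≤ n → A.length ≤ m →
    muAux y n A = muAux y m A := by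
  intro n
  induction n with
  | zero =>
    intro m A h1 _
    rw [List.length_eq_zero_iff.mp (Nat.le_zero.mp h1)]
    cases m <;> simp [muAux]
  | succ n ih =>
    intro m A h1 h2
    cases m with
    | zero =>
      rw [List.length_eq_zero_iff.mp (Nat.le_zero.mp h2)]
      simp [muAux]
    | succ m =>
      rw [muAux, muAux]
      split_ifs with hl2 hl3
      · rfl
      · rfl
      · refine Finset.sum_congr rfl fun i hi => Finset.sum_congr rfl fun j hj => ?_
        rw [Finset.mem_range] at hi
        rw [Finset.mem_Ioo] at hj
        have hlen : (pairReduce A i j).length = A.length - 1 :=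
          length_pairReduce A i j hj.1 hj.2
        have h4 : 4 ≤ A.length := by omega
        rw [ih m (pairReduce A i j) (by omega) (by omega),
          ih m [A.getD i 0, A.getD j 0, -(A.getD i 0 + A.getD j 0)] (by simp; omega)
            (by simp; omega)]

lemma muAux_eq_muPlus (y : ℝ) (n : ℕ) (A : List (ℤ × ℤ)) (h : A.length ≤ n) :
    muAux y n A = muPlus y A := muAux_fuel y n A.length A h le_rfl

lemma muPlus_small (y : ℝ) (A : List (ℤ × ℤ)) (h : A.length ≤ 2) : muPlus y A = 1 := by
  unfold muPlus
  match A, h with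
  | [], _ => simp [muAux]
  | [a], _ => simp [muAux]
  | [a, b], _ => simp [muAux]

lemma muPlus_three (y : ℝ) (a b c : ℤ × ℤ) : muPlus y [a, b, c] = brP y |wedge a b| := by
  simp [muPlus, muAux]

lemma muPlus_rec (y : ℝ) (A : List (ℤ × ℤ)) (h : 4 ≤ A.length) :
    muPlus y A = ∑ i ∈ Finset.range A.length, ∑ j ∈ Finset.Ioo i A.length,
      muPlus y (pairReduce A i j) * brP y |wedge (A.getD i 0) (A.getD j 0)| := by
  obtain ⟨s, hs⟩ : ∃ s, A.length = s + 1 := ⟨A.length - 1, by omega⟩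
  show muAux y A.length A = _
  rw [show muAux y A.length = muAux y (s+1) by rw [hs], muAux]
  rw [if_neg (by omega), if_neg (by omega)]
  refine Finset.sum_congr rfl fun i hi => Finset.sum_congr rfl fun j hj => ?_
  rw [Finset.mem_range] at hi
  rw [Finset.mem_Ioo] at hj
  have hlen : (pairReduce A i j).length = A.length - 1 :=
    length_pairReduce A i j hj.1 (by omega)
  rw [muAux_eq_muPlus y s _ (by omega), muAux_eq_muPlus y s _ (by simp; omega),
    muPlus_three]

lemma perm_get_cons {α : Type*} [DecidableEq α] (A : List α) (n : ℕ) (hn : n < A.length) :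
    A ~ A[n] :: A.eraseIdx n :=
  (List.perm_cons_erase (List.getElem_mem hn)).trans ((List.erase_getElem hn).cons _)

lemma erase2_perm (A : List (ℤ × ℤ)) (i j : ℕ) (hij : i < j) (hj : j < A.length) :
    A ~ A.getD i 0 :: A.getD j 0 :: ((A.eraseIdx j).eraseIdx i) := by
  have hi : i < A.length := hij.trans hj
  have hi' : i < (A.eraseIdx j).length := by rw [List.length_eraseIdx]; simp [hj]; omega
  have h1 : A ~ A[j] :: A.eraseIdx j := perm_get_cons A j hj
  have h2 : A.eraseIdx j ~ (A.eraseIdx j)[i] :: (A.eraseIdx j).eraseIdx i :=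
    perm_get_cons _ i hi'
  have h3 : (A.eraseIdx j)[i] = A[i] := List.getElem_eraseIdx_of_lt hi' hij
  rw [List.getD_eq_getElem A 0 hi, List.getD_eq_getElem A 0 hj]
  refine (h1.trans (h2.cons _)).trans ?_
  rw [h3]
  exact List.Perm.swap _ _ _

lemma pairReduce_perm_cons (A : List (ℤ × ℤ)) (i j : ℕ) :
    pairReduce A i j ~ (A.getD i 0 + A.getD j 0) :: ((A.eraseIdx j).eraseIdx i) :=
  List.perm_append_singleton _ _

lemma sum_pairReduce (A : List (ℤ × ℤ)) (i j : ℕ) (hij : i < j) (hj : j < A.length) :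
    (pairReduce A i j).sum = A.sum := by
  rw [(pairReduce_perm_cons A i j).sum_eq, (erase2_perm A i j hij hj).sum_eq]
  simp [add_assoc]

lemma pairReduce_perm_of_perm (A B : List (ℤ × ℤ)) (hAB : A ~ B) {i j k l : ℕ}
    (hij : i < j) (hj : j < B.length) (hkl : k < l) (hl : l < A.length)
    (hpair : (B.getD i 0 = A.getD k 0 ∧ B.getD j 0 = A.getD l 0) ∨
      (B.getD i 0 = A.getD l 0 ∧ B.getD j 0 = A.getD k 0)) :
    pairReduce B i j ~ pairReduce A k l := by
  have e1 := erase2_perm B i j hij hj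
  have e2 := erase2_perm A k l hkl hl
  have hM : (B.getD i 0 ::ₘ B.getD j 0 ::ₘ (((B.eraseIdx j).eraseIdx i : List (ℤ×ℤ)) : Multiset (ℤ×ℤ)))
      = (A.getD k 0 ::ₘ A.getD l 0 ::ₘ (((A.eraseIdx l).eraseIdx k : List (ℤ×ℤ)) : Multiset (ℤ×ℤ))) := by
    have hB : ((B : Multiset (ℤ×ℤ))) = _ := Multiset.coe_eq_coe.mpr e1
    have hA : ((A : Multiset (ℤ×ℤ))) = _ := Multiset.coe_eq_coe.mpr e2
    have hAB' : ((A : Multiset (ℤ×ℤ))) = (B : Multiset (ℤ×ℤ)) := Multiset.coe_eq_coe.mpr hAB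
    rw [Multiset.cons_coe, Multiset.cons_coe, Multiset.cons_coe, Multiset.cons_coe,
      ← hB, ← hA, hAB']
  have hrest : ((B.eraseIdx j).eraseIdx i : List (ℤ×ℤ)) ~ ((A.eraseIdx l).eraseIdx k) := by
    rw [← Multiset.coe_eq_coe]
    rcases hpair with ⟨h1, h2⟩ | ⟨h1, h2⟩
    · rw [h1, h2, Multiset.cons_inj_right, Multiset.cons_inj_right] at hM
      exact hM
    · rw [h1, h2, Multiset.cons_swap, Multiset.cons_inj_right, Multiset.cons_inj_right] at hM
      exact hM
  refine (pairReduce_perm_cons B i j).trans (.trans ?_ (pairReduce_perm_cons A k l).symm)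
  have hval : B.getD i 0 + B.getD j 0 = A.getD k 0 + A.getD l 0 := by
    rcases hpair with ⟨h1, h2⟩ | ⟨h1, h2⟩ <;> rw [h1, h2]
    exact add_comm _ _
  rw [hval]
  exact hrest.cons _


lemma range_filter_eq_Ioo (i r : ℕ) :
    (Finset.range r).filter (fun j => i < j) = Finset.Ioo i r := by
  ext j; simp [Finset.mem_Ioo, and_comm]

lemma double_sum_fin (r : ℕ) (f : ℕ → ℕ → ℝ) :
    ∑ i ∈ Finset.range r, ∑ j ∈ Finset.Ioo i r, f i j
      = ∑ i : Fin r, ∑ j : Fin r, if (i : ℕ) < (j : ℕ) then f i j else 0 := by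
  rw [← Fin.sum_univ_eq_sum_range (fun i => ∑ j ∈ Finset.Ioo i r, f i j) r]
  refine Finset.sum_congr rfl fun i _ => ?_
  rw [← range_filter_eq_Ioo (i : ℕ) r, Finset.sum_filter,
    ← Fin.sum_univ_eq_sum_range (fun j => if (i : ℕ) < j then f i j else 0) r]

lemma half_sum {r : ℕ} (k : Fin r → Fin r → ℝ) (hk : ∀ i j, k i j = k j i) :
    ∑ i : Fin r, ∑ j : Fin r, (if i ≠ j then k i j else 0)
      = 2 * ∑ i : Fin r, ∑ j : Fin r, (if (i : ℕ) < (j : ℕ) then k i j else 0) := by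
  have hpt : ∀ i j : Fin r, (if i ≠ j then k i j else 0) =
      (if (i : ℕ) < (j : ℕ) then k i j else 0) + (if (j : ℕ) < (i : ℕ) then k i j else 0) := by
    intro i j
    simp only [ne_eq, ← Fin.val_eq_val]
    rcases lt_trichotomy (i : ℕ) (j : ℕ) with h | h | h
    · rw [if_pos (by omega), if_pos h, if_neg (by omega), add_zero]
    · rw [if_neg (by omega), if_neg (by omega), if_neg (by omega), add_zero]
    · rw [if_pos (by omega), if_neg (by omega), if_pos h, zero_add]
  calc ∑ i : Fin r, ∑ j : Fin r, (if i ≠ j then k i j else 0)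
      = ∑ i : Fin r, ∑ j : Fin r, ((if (i:ℕ) < (j:ℕ) then k i j else 0)
          + (if (j:ℕ) < (i:ℕ) then k i j else 0)) := by
        exact Finset.sum_congr rfl fun i _ => Finset.sum_congr rfl fun j _ => hpt i j
    _ = (∑ i : Fin r, ∑ j : Fin r, (if (i:ℕ) < (j:ℕ) then k i j else 0))
          + ∑ i : Fin r, ∑ j : Fin r, (if (j:ℕ) < (i:ℕ) then k i j else 0) := by
        rw [← Finset.sum_add_distrib]
        exact Finset.sum_congr rfl fun i _ => Finset.sum_add_distrib
    _ = 2 * ∑ i : Fin r, ∑ j : Fin r, (if (i:ℕ) < (j:ℕ) then k i j else 0) := by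
        rw [two_mul]
        congr 1
        rw [Finset.sum_comm]
        exact Finset.sum_congr rfl fun i _ => Finset.sum_congr rfl fun j _ => by
          rw [hk]

lemma sum_lt_reindex {r : ℕ} (k : Fin r → Fin r → ℝ) (hk : ∀ i j, k i j = k j i)
    (e : Equiv.Perm (Fin r)) :
    ∑ i : Fin r, ∑ j : Fin r, (if (i:ℕ) < (j:ℕ) then k (e i) (e j) else 0)
      = ∑ i : Fin r, ∑ j : Fin r, (if (i:ℕ) < (j:ℕ) then k i j else 0) := by
  have h1 := half_sum (fun i j => k (e i) (e j)) (fun i j => hk _ _)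
  have h2 := half_sum k hk
  have h3 : ∑ i : Fin r, ∑ j : Fin r, (if i ≠ j then k (e i) (e j) else 0)
      = ∑ i : Fin r, ∑ j : Fin r, (if i ≠ j then k i j else 0) := by
    have hpt : ∀ i j : Fin r, (if i ≠ j then k (e i) (e j) else 0)
        = (fun a b => if a ≠ b then k a b else 0) (e i) (e j) := by
      intro i j
      simp only [ne_eq, EmbeddingLike.apply_eq_iff_eq]
    calc ∑ i : Fin r, ∑ j : Fin r, (if i ≠ j then k (e i) (e j) else 0)
        = ∑ i : Fin r, ∑ j : Fin r, (fun a b => if a ≠ b then k a b else 0) (e i) (e j) :=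
          Finset.sum_congr rfl fun i _ => Finset.sum_congr rfl fun j _ => hpt i j
      _ = ∑ i : Fin r, ∑ j : Fin r, (fun a b => if a ≠ b then k a b else 0) (e i) j :=
          Finset.sum_congr rfl fun i _ =>
            Equiv.sum_comp e ((fun a b => if a ≠ b then k a b else 0) (e i))
      _ = ∑ i : Fin r, ∑ j : Fin r, (if i ≠ j then k i j else 0) :=
          Equiv.sum_comp e (fun a => ∑ j : Fin r, (if a ≠ j then k a j else 0))
  rw [h1, h2] at h3
  linarith

lemma wedge_comm_abs (a b : ℤ × ℤ) : |wedge b a| = |wedge a b| := by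
  rw [show wedge b a = -wedge a b from by unfold wedge; ring, abs_neg]

lemma wedge_third_right (a b : ℤ × ℤ) : wedge a (-(a+b)) = -wedge a b := by
  unfold wedge
  simp only [Prod.fst_neg, Prod.snd_neg, Prod.fst_add, Prod.snd_add]
  ring

lemma wedge_third_right' (a b : ℤ × ℤ) : wedge b (-(a+b)) = wedge a b := by
  unfold wedge
  simp only [Prod.fst_neg, Prod.snd_neg, Prod.fst_add, Prod.snd_add]
  ring


def swapFun (n : ℕ) (i : Fin (n+2)) : Fin (n+2) :=
  Fin.cases 1 (fun j => Fin.cases 0 (fun k => k.succ.succ) j) i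

lemma swapFun_zero (n : ℕ) : swapFun n 0 = 1 := by simp [swapFun]
lemma swapFun_one (n : ℕ) : swapFun n ((0 : Fin (n+1)).succ) = 0 := by
  rw [swapFun, Fin.cases_succ, Fin.cases_zero]
lemma swapFun_succ (n : ℕ) (k : Fin n) : swapFun n k.succ.succ = k.succ.succ := by simp [swapFun]

lemma swapFun_invol (n : ℕ) (i : Fin (n+2)) : swapFun n (swapFun n i) = i := by
  refine Fin.cases ?_ (fun j => Fin.cases ?_ (fun k => ?_) j) i
  · rw [swapFun_zero, ← Fin.succ_zero_eq_one, swapFun_one]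
  · rw [swapFun_one, swapFun_zero, Fin.succ_zero_eq_one]
  · rw [swapFun_succ, swapFun_succ]

def swapFin (n : ℕ) : Equiv.Perm (Fin (n+2)) :=
  ⟨swapFun n, swapFun n, swapFun_invol n, swapFun_invol n⟩


lemma perm_exists_equiv {α : Type*} : ∀ {l₁ l₂ : List α}, l₁ ~ l₂ →
    ∃ e : Fin l₂.length ≃ Fin l₁.length, ∀ i, l₂.get i = l₁.get (e i) := by
  intro l₁ l₂ h
  induction h with
  | nil => exact ⟨Equiv.refl _, fun i => i.elim0⟩
  | cons x h ih =>
      obtain ⟨e, he⟩ := ih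
      refine ⟨(finSuccEquiv _).trans ((Equiv.optionCongr e).trans (finSuccEquiv _).symm), ?_⟩
      intro i
      refine Fin.cases ?_ (fun j => ?_) i
      · simp
      · simpa using he j
  | swap x y l =>
      refine ⟨swapFin l.length, fun i => ?_⟩
      refine Fin.cases ?_ (fun j => Fin.cases ?_ (fun k => ?_) j) i
      · show _ = (y :: x :: l).get (swapFun l.length 0)
        rw [swapFun_zero]; rfl
      · show _ = (y :: x :: l).get (swapFun l.length ((0 : Fin (l.length+1)).succ))
        rw [swapFun_one]; rfl
      · show _ = (y :: x :: l).get (swapFun l.length k.succ.succ)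
        rw [swapFun_succ]; rfl
  | trans h₁ h₂ ih₁ ih₂ =>
      obtain ⟨e₁, he₁⟩ := ih₁; obtain ⟨e₂, he₂⟩ := ih₂
      exact ⟨e₂.trans e₁, fun i => (he₂ i).trans (he₁ (e₂ i))⟩

section
variable (y : ℝ)

lemma key3 (A B : List (ℤ × ℤ)) (hA : A.length = 3) (hAB : A ~ B) (hsum : A.sum = 0) :
    muPlus y B = muPlus y A := by
  obtain ⟨e, he⟩ := perm_exists_equiv hAB
  have hB : B.length = 3 := by rw [← hAB.length_eq, hA]
  obtain ⟨a, b, c, rfl⟩ := List.length_eq_three.mp hA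
  obtain ⟨x, x', z, rfl⟩ := List.length_eq_three.mp hB
  rw [muPlus_three, muPlus_three]
  have hc : c = -(a + b) := by
    have h : (a + b) + c = 0 := by
      simpa [add_assoc] using hsum
    exact eq_neg_of_add_eq_zero_right h
  have hx : x = [a, b, c].get (e ⟨0, by simp⟩) := he ⟨0, by simp⟩
  have hy : x' = [a, b, c].get (e ⟨1, by simp⟩) := he ⟨1, by simp⟩
  have hpq : e ⟨0, by simp⟩ ≠ e ⟨1, by simp⟩ := by
    intro hcon
    have := e.injective hcon
    simp [Fin.mk.injEq] at this
  rcases hp : e ⟨0, by simp⟩ with ⟨pv, hpl⟩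
  rcases hq : e ⟨1, by simp⟩ with ⟨qv, hql⟩
  rw [hp] at hx hpq
  rw [hq] at hy hpq
  have hpv : pv < 3 := by simpa using hpl
  have hqv : qv < 3 := by simpa using hql
  have hne : pv ≠ qv := by
    intro hcon
    exact hpq (by simp [hcon])
  subst hc
  interval_cases pv <;> interval_cases qv <;> simp_all
  all_goals
    (congr 1
     rw [abs_eq_abs]
     first
       | (left;
          simp only [wedge, Prod.fst_neg, Prod.snd_neg, Prod.fst_add, Prod.snd_add]; ring1)
       | (right;
          simp only [wedge, Prod.fst_neg, Prod.snd_neg, Prod.fst_add, Prod.snd_add]; ring1))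
end

lemma key (y : ℝ) : ∀ r : ℕ, ∀ A B : List (ℤ × ℤ), A.length = r → A ~ B → A.sum = 0 →
    muPlus y B = muPlus y A := by
  intro r
  induction r using Nat.strong_induction_on with
  | _ r ih =>
  intro A B hlen hAB hsum
  have hlenB : B.length = r := by rw [← hAB.length_eq, hlen]
  rcases lt_or_ge r 3 with h3 | h3
  · rw [muPlus_small y A (by omega), muPlus_small y B (by omega)]
  rcases eq_or_lt_of_le h3 with h3' | h4
  · exact key3 y A B (by omega) hAB hsum
  -- now r ≥ 4
  obtain ⟨e0, he0⟩ := perm_exists_equiv hAB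
  set e : Equiv.Perm (Fin r) := ((finCongr hlenB).symm.trans e0).trans (finCongr hlen) with hedef
  have hgd : ∀ i : Fin r, B.getD (i : ℕ) 0 = A.getD ((e i : Fin r) : ℕ) 0 := by
    intro i
    have hiB : (i : ℕ) < B.length := by rw [hlenB]; exact i.isLt
    have hiA : ((e i : Fin r) : ℕ) < A.length := by rw [hlen]; exact (e i).isLt
    rw [List.getD_eq_getElem _ _ hiB, List.getD_eq_getElem _ _ hiA]
    have h := he0 (Fin.cast hlenB.symm i)
    simpa [hedef, List.get_eq_getElem] using h
  rw [muPlus_rec y A (by omega), muPlus_rec y B (by omega), hlen, hlenB,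
    double_sum_fin r (fun i j => muPlus y (pairReduce A i j) *
      brP y |wedge (A.getD i 0) (A.getD j 0)|),
    double_sum_fin r (fun i j => muPlus y (pairReduce B i j) *
      brP y |wedge (B.getD i 0) (B.getD j 0)|)]
  set kA : Fin r → Fin r → ℝ := fun i j =>
    muPlus y (pairReduce A (min (i : ℕ) (j : ℕ)) (max (i : ℕ) (j : ℕ))) *
      brP y |wedge (A.getD (i : ℕ) 0) (A.getD (j : ℕ) 0)| with hkA
  have hsym : ∀ i j, kA i j = kA j i := by
    intro i j
    simp only [hkA]
    rw [Nat.min_comm, Nat.max_comm, wedge_comm_abs]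
  have step1 : (∑ i : Fin r, ∑ j : Fin r, if (i : ℕ) < (j : ℕ) then
        muPlus y (pairReduce B (i : ℕ) (j : ℕ)) *
          brP y |wedge (B.getD (i : ℕ) 0) (B.getD (j : ℕ) 0)| else 0)
      = ∑ i : Fin r, ∑ j : Fin r, if (i : ℕ) < (j : ℕ) then kA (e i) (e j) else 0 := by
    refine Finset.sum_congr rfl fun i _ => Finset.sum_congr rfl fun j _ => ?_
    by_cases hij : (i : ℕ) < (j : ℕ)
    · rw [if_pos hij, if_pos hij]
      have hne : ((e i : Fin r) : ℕ) ≠ ((e j : Fin r) : ℕ) := by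
        intro hc
        have h1 : e i = e j := Fin.ext hc
        have h2 : i = j := e.injective h1
        have h3 : (i : ℕ) = (j : ℕ) := congrArg Fin.val h2
        omega
      set m : ℕ := min ((e i : Fin r) : ℕ) ((e j : Fin r) : ℕ) with hm
      set M : ℕ := max ((e i : Fin r) : ℕ) ((e j : Fin r) : ℕ) with hM
      have hmM : m < M := by omega
      have hMlt : M < A.length := by
        rw [hlen]
        have := (e i).isLt
        have := (e j).isLt
        omega
      have hjB : (j : ℕ) < B.length := by rw [hlenB]; exact j.isLt
      have hpair : (B.getD (i : ℕ) 0 = A.getD m 0 ∧ B.getD (j : ℕ) 0 = A.getD M 0) ∨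
          (B.getD (i : ℕ) 0 = A.getD M 0 ∧ B.getD (j : ℕ) 0 = A.getD m 0) := by
        rcases lt_or_gt_of_ne hne with hlt | hgt
        · left
          constructor
          · rw [hgd i]; congr 1; omega
          · rw [hgd j]; congr 1; omega
        · right
          constructor
          · rw [hgd i]; congr 1; omega
          · rw [hgd j]; congr 1; omega
      have hperm : pairReduce B (i : ℕ) (j : ℕ) ~ pairReduce A m M :=
        pairReduce_perm_of_perm A B hAB hij hjB hmM hMlt hpair
      have hsum' : (pairReduce A m M).sum = 0 := by
        rw [sum_pairReduce A m M hmM hMlt]; exact hsum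
      have hlen' : (pairReduce A m M).length = r - 1 := by
        rw [length_pairReduce A m M hmM hMlt, hlen]
      congr 1
      · exact ih (r - 1) (by omega) (pairReduce A m M) (pairReduce B (i : ℕ) (j : ℕ))
          hlen' hperm.symm hsum'
      · rw [hgd i, hgd j]
    · rw [if_neg hij, if_neg hij]
  have step3 : (∑ i : Fin r, ∑ j : Fin r, if (i : ℕ) < (j : ℕ) then kA i j else 0)
      = ∑ i : Fin r, ∑ j : Fin r, if (i : ℕ) < (j : ℕ) then
          muPlus y (pairReduce A (i : ℕ) (j : ℕ)) *
            brP y |wedge (A.getD (i : ℕ) 0) (A.getD (j : ℕ) 0)| else 0 := by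
    refine Finset.sum_congr rfl fun i _ => Finset.sum_congr rfl fun j _ => ?_
    by_cases hij : (i : ℕ) < (j : ℕ)
    · rw [if_pos hij, if_pos hij]
      simp only [hkA]
      rw [Nat.min_eq_left (le_of_lt hij), Nat.max_eq_right (le_of_lt hij)]
    · rw [if_neg hij, if_neg hij]
  rw [step1, sum_lt_reindex kA hsym e, step3]


/-- for a balanced sequence `A` of vectors in `ℤ²`, the value
`μ⁺_y(A)` does not change under any permutation of the entries of `A`. -/
theorem stmt9 (y : ℝ) (hy0 : 0 < y) (A : List (ℤ × ℤ)) (hbal : A.sum = 0)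
    (σ : Equiv.Perm (Fin A.length)) :
    muPlus y (List.ofFn (fun i => A.get (σ i))) = muPlus y A := by
  have h1 : A ~ List.ofFn (fun i => A.get (σ i)) := by
    have h := Equiv.Perm.ofFn_comp_perm σ A.get
    rw [List.ofFn_get] at h
    exact h.symm
  exact key y A.length A _ rfl h1 hbal
end

section
/- Let A = (a₁, …, a_r) be a finite sequence of vectors in ℤ² with r ≥ 3. Then there exists a Laurent polynomial P ∈ ℤ[t, t⁻¹] such that for every real number y > 0, μ⁺_y(A) = P(y^{1/2}) / (y^{1/2} + y^{−1/2})^{r−2}. (In particular, an unmarked vertex of valency j contributes at most j − 3 factors y^{1/2} + y^{−1/2} to the denominator of its refined multiplicity [|a₁∧a₂|]⁻_y · μ⁺_y(A') with A' of length j − 1.) -/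
noncomputable def evalHom (t : ℝ) (ht : t ≠ 0) : AddMonoidAlgebra ℤ ℤ →ₐ[ℤ] ℝ :=
  AddMonoidAlgebra.lift ℤ ℝ ℤ ((Units.coeHom ℝ).comp (zpowersHom ℝˣ (Units.mk0 t ht)))

noncomputable def evalL (t : ℝ) (p : AddMonoidAlgebra ℤ ℤ) : ℝ :=
  p.coeff.sum fun n a => (a : ℝ) * t ^ n

lemma evalL_eq (t : ℝ) (ht : t ≠ 0) (p : AddMonoidAlgebra ℤ ℤ) :
    evalL t p = evalHom t ht p := by
  rw [evalL, evalHom, AddMonoidAlgebra.lift_apply]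
  refine Finsupp.sum_congr fun n _ => ?_
  simp [zsmul_eq_mul, Units.smul_def]

lemma evalL_single (t : ℝ) (n a : ℤ) :
    evalL t (AddMonoidAlgebra.single n a) = (a : ℝ) * t ^ n := by
  rw [evalL, AddMonoidAlgebra.coeff_single, Finsupp.sum_single_index]; simp

lemma evalL_add (t : ℝ) (ht : t ≠ 0) (p q : AddMonoidAlgebra ℤ ℤ) :
    evalL t (p + q) = evalL t p + evalL t q := by
  simp [evalL_eq t ht, map_add]

lemma evalL_mul (t : ℝ) (ht : t ≠ 0) (p q : AddMonoidAlgebra ℤ ℤ) :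
    evalL t (p * q) = evalL t p * evalL t q := by
  simp [evalL_eq t ht, map_mul]

lemma evalL_sum (t : ℝ) (ht : t ≠ 0) {ι : Type*} (s : Finset ι) (f : ι → AddMonoidAlgebra ℤ ℤ) :
    evalL t (∑ i ∈ s, f i) = ∑ i ∈ s, evalL t (f i) := by
  simp [evalL_eq t ht, map_sum]

lemma ypow {y : ℝ} (hy : 0 < y) (α : ℤ) : y ^ ((α : ℝ) / 2) = (y ^ ((1:ℝ)/2)) ^ α := by
  rw [← Real.rpow_intCast (y ^ ((1:ℝ)/2)) α, ← Real.rpow_mul hy.le]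
  congr 1; ring

lemma yneg {y : ℝ} (hy : 0 < y) : y ^ (-(1:ℝ)/2) = (y ^ ((1:ℝ)/2))⁻¹ := by
  rw [neg_div, Real.rpow_neg hy.le]

lemma brP_mul {y : ℝ} (hy : 0 < y) (α : ℤ) :
    brP y α * (y ^ ((1:ℝ)/2) + (y ^ ((1:ℝ)/2))⁻¹)
      = (y ^ ((1:ℝ)/2)) ^ α + (y ^ ((1:ℝ)/2)) ^ (-α) := by
  have ht : 0 < y ^ ((1:ℝ)/2) := Real.rpow_pos_of_pos hy _
  have hd : y ^ ((1:ℝ)/2) + (y ^ ((1:ℝ)/2))⁻¹ ≠ 0 := by positivity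
  rw [brP, show -(α:ℝ)/2 = ((-α : ℤ) : ℝ)/2 by push_cast; ring, ypow hy, ypow hy,
    show y ^ (-(1:ℝ)/2) = (y ^ ((1:ℝ)/2))⁻¹ from yneg hy, div_mul_cancel₀ _ hd]

lemma muAux_succ (y : ℝ) (n : ℕ) (A : List (ℤ × ℤ)) :
    muAux y (n+1) A =
    if A.length ≤ 2 then 1
    else if A.length = 3 then brP y |wedge (A.getD 0 0) (A.getD 1 0)|
    else ∑ i ∈ Finset.range A.length, ∑ j ∈ Finset.Ioo i A.length,
      muAux y n (pairReduce A i j) *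
        muAux y n [A.getD i 0, A.getD j 0, -(A.getD i 0 + A.getD j 0)] := rfl

lemma muAux_three (y : ℝ) {n : ℕ} {A : List (ℤ × ℤ)} (h : A.length = 3) (hn : 1 ≤ n) :
    muAux y n A = brP y |wedge (A.getD 0 0) (A.getD 1 0)| := by
  obtain ⟨m, rfl⟩ : ∃ m, n = m + 1 := ⟨n - 1, by omega⟩
  rw [muAux_succ, if_neg (by omega), if_pos h]

lemma pairReduce_length {A : List (ℤ × ℤ)} {i j : ℕ} (hij : i < j) (hj : j < A.length) :
    (pairReduce A i j).length = A.length - 1 := by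
  simp only [pairReduce, List.length_append, List.length_eraseIdx, List.length_singleton]
  rw [if_pos hj, if_pos (by omega)]
  omega

lemma key_s10 : ∀ n (A : List (ℤ × ℤ)), 3 ≤ A.length → A.length ≤ n →
    ∃ p : AddMonoidAlgebra ℤ ℤ, ∀ y : ℝ, 0 < y →
      muAux y n A * (y ^ ((1:ℝ)/2) + (y ^ ((1:ℝ)/2))⁻¹) ^ (A.length - 2)
        = evalL (y ^ ((1:ℝ)/2)) p := by
  intro n
  induction n with
  | zero => intro A h3 h0; omega
  | succ n IH =>
    intro A h3 hle
    by_cases h4 : A.length = 3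
    · refine ⟨AddMonoidAlgebra.single |wedge (A.getD 0 0) (A.getD 1 0)| 1 +
        AddMonoidAlgebra.single (-|wedge (A.getD 0 0) (A.getD 1 0)|) 1, fun y hy => ?_⟩
      have ht : (y ^ ((1:ℝ)/2)) ≠ 0 := (Real.rpow_pos_of_pos hy _).ne'
      rw [muAux_three y h4 (by omega), h4, show (3 - 2 : ℕ) = 1 from rfl, pow_one,
        brP_mul hy, evalL_add _ ht, evalL_single, evalL_single]
      push_cast
      ring
    · have h4' : 4 ≤ A.length := by omega
      have H : ∀ i j : ℕ, ∃ pq : AddMonoidAlgebra ℤ ℤ × AddMonoidAlgebra ℤ ℤ,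
          i < j → j < A.length → ∀ y : ℝ, 0 < y →
          muAux y n (pairReduce A i j) *
              (y ^ ((1:ℝ)/2) + (y ^ ((1:ℝ)/2))⁻¹) ^ (A.length - 3)
            = evalL (y ^ ((1:ℝ)/2)) pq.1 ∧
          muAux y n [A.getD i 0, A.getD j 0, -(A.getD i 0 + A.getD j 0)] *
              (y ^ ((1:ℝ)/2) + (y ^ ((1:ℝ)/2))⁻¹)
            = evalL (y ^ ((1:ℝ)/2)) pq.2 := by
        intro i j
        by_cases hij : i < j ∧ j < A.length
        · have hlen : (pairReduce A i j).length = A.length - 1 :=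
            pairReduce_length hij.1 hij.2
          obtain ⟨p, hp⟩ := IH (pairReduce A i j) (by omega) (by omega)
          obtain ⟨q, hq⟩ := IH [A.getD i 0, A.getD j 0, -(A.getD i 0 + A.getD j 0)]
            (by simp) (by simp; omega)
          refine ⟨(p, q), fun _ _ y hy => ⟨?_, ?_⟩⟩
          · have := hp y hy
            rwa [hlen, show A.length - 1 - 2 = A.length - 3 by omega] at this
          · have := hq y hy
            simpa using this
        · exact ⟨(0, 0), fun h1 h2 => absurd ⟨h1, h2⟩ hij⟩
      choose pq hpq using H
      refine ⟨∑ i ∈ Finset.range A.length, ∑ j ∈ Finset.Ioo i A.length,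
        (pq i j).1 * (pq i j).2, fun y hy => ?_⟩
      have ht : (y ^ ((1:ℝ)/2)) ≠ 0 := (Real.rpow_pos_of_pos hy _).ne'
      rw [muAux_succ, if_neg (by omega), if_neg h4]
      rw [evalL_sum _ ht, Finset.sum_mul]
      refine Finset.sum_congr rfl fun i hi => ?_
      rw [evalL_sum _ ht, Finset.sum_mul]
      refine Finset.sum_congr rfl fun j hj => ?_
      simp only [Finset.mem_range] at hi
      simp only [Finset.mem_Ioo] at hj
      obtain ⟨h1, h2⟩ := hpq i j hj.1 hj.2 y hy
      rw [evalL_mul _ ht, ← h1, ← h2,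
        show A.length - 2 = (A.length - 3) + 1 by omega, pow_succ]
      ring

/-- for a sequence `A` of `r ≥ 3` vectors in `ℤ²` there is a Laurent
polynomial `P ∈ ℤ[t,t⁻¹]` (encoded by its finite support `s` and coefficients `c`)
such that `μ⁺_y(A) = P(y^{1/2}) / (y^{1/2} + y^{−1/2})^{r−2}` for all `y > 0`. -/
theorem stmt10 (A : List (ℤ × ℤ)) (hr : 3 ≤ A.length) :
    ∃ (s : Finset ℤ) (c : ℤ → ℤ), ∀ y : ℝ, 0 < y →
      muPlus y A =
        (∑ n ∈ s, (c n : ℝ) * (y ^ ((1 : ℝ) / 2)) ^ n) /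
          (y ^ ((1 : ℝ) / 2) + y ^ (-(1 : ℝ) / 2)) ^ (A.length - 2) := by
  obtain ⟨p, hp⟩ := key_s10 A.length A hr le_rfl
  refine ⟨p.coeff.support, fun n => p.coeff n, fun y hy => ?_⟩
  have ht : 0 < y ^ ((1:ℝ)/2) := Real.rpow_pos_of_pos hy _
  have hd : (y ^ ((1:ℝ)/2) + (y ^ ((1:ℝ)/2))⁻¹) ^ (A.length - 2) ≠ 0 := by positivity
  rw [yneg hy, eq_div_iff hd, muPlus]
  rw [hp y hy]
  rfl
end
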